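/- arXiv:1206.4178 — 5 statements merged into one kernel-verified Lean document; each statement's English description precedes it below -/
import Mathlib

section
/- Let r̄_n denote the number of smooth collections of length n (collections S = (S_1,...,S_n) of subsets of {1,...,n+1} with #S_i = i, S_i ⊆ S_{i+1}, and such that for all 1 ≤ a < b ≤ n, b ∈ S_a implies a+1 ∈ S_b). Then r̄_n satisfies the recursion r̄_n = r̄_{n-1} + Σ_{k=0}^{n-1} r̄_k · r̄_{n-1-k}, with r̄_0 = 1. -/
/-- A collection `S` of subsets `S 1, ..., S n` of `{1, ..., n+1}` is smooth if
`#S i = i`, `S i ⊆ S (i+1)`, and for all `1 ≤ a < b ≤ n`, `b ∈ S a → a+1 ∈ S b`;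
`S i = ∅` outside the range `1 ≤ i ≤ n`. -/
def IsSmooth (n : ℕ) (S : ℕ → Finset ℕ) : Prop :=
  (∀ i, i = 0 ∨ n < i → S i = ∅) ∧
  (∀ i, 1 ≤ i → i ≤ n → S i ⊆ Finset.Icc 1 (n + 1) ∧ (S i).card = i) ∧
  (∀ i, 1 ≤ i → i < n → S i ⊆ S (i + 1)) ∧
  (∀ a b, 1 ≤ a → a < b → b ≤ n → b ∈ S a → a + 1 ∈ S b)

namespace SmoothAux

lemma smooth_chain {n : ℕ} {S : ℕ → Finset ℕ} (hS : IsSmooth n S) {a b : ℕ}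
    (ha : 1 ≤ a) (hab : a ≤ b) (hbn : b ≤ n) : S a ⊆ S b := by
  obtain ⟨-, -, hch, -⟩ := hS
  induction b, hab using Nat.le_induction with
  | base => exact subset_rfl
  | succ m hm ih => exact (ih (by omega)).trans (hch m (by omega) (by omega))

lemma smooth_zero_iff (S : ℕ → Finset ℕ) : IsSmooth 0 S ↔ S = fun _ => ∅ := by
  constructor
  · intro h; funext i; exact h.1 i (by omega)
  · rintro rfl
    exact ⟨fun i _ => rfl, fun i h1 h0 => by omega, fun i h1 h0 => by omega,
      fun a b h1 hab hb0 => by omega⟩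

lemma smooth_finite (n : ℕ) : {S : ℕ → Finset ℕ | IsSmooth n S}.Finite := by
  have : Finite ↥{S : ℕ → Finset ℕ | IsSmooth n S} := by
    let F : {S : ℕ → Finset ℕ | IsSmooth n S} →
        (Fin (n+1) → ((Finset.Icc 1 (n+1)).powerset : Finset (Finset ℕ))) := fun S i =>
      ⟨S.1 i.val, by
        rw [Finset.mem_powerset]
        rcases Nat.eq_zero_or_pos i.val with h | h
        · rw [S.2.1 i.val (Or.inl h)]; exact Finset.empty_subset _
        · exact (S.2.2.1 i.val h (by omega)).1⟩
    have hinj : Function.Injective F := by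
      intro S S' h
      apply Subtype.ext; funext i
      by_cases hi : i ≤ n
      · have := congrFun h ⟨i, by omega⟩
        exact congrArg Subtype.val this
      · rw [S.2.1 i (Or.inr (by omega)), S'.2.1 i (Or.inr (by omega))]
    exact Finite.of_injective F hinj
  exact Set.toFinite _

lemma ncard_eq_of_equiv {α β : Type*} {s : Set α} {t : Set β} (e : s ≃ t) :
    s.ncard = t.ncard := by
  rw [← Nat.card_coe_set_eq, ← Nat.card_coe_set_eq]
  exact Nat.card_congr e

lemma ncard_eq_mul {α β γ : Type*} {s : Set α} {t : Set β} {u : Set γ}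
    (e : s ≃ t × u) : s.ncard = t.ncard * u.ncard := by
  rw [← Nat.card_coe_set_eq, ← Nat.card_coe_set_eq, ← Nat.card_coe_set_eq,
    Nat.card_congr e, Nat.card_prod]

def fA (n : ℕ) (S : ℕ → Finset ℕ) : ℕ → Finset ℕ := fun j =>
  if 1 ≤ j ∧ j ≤ n-1 then ((S (j+1)).erase 1).image (· - 1) else ∅

def bA (n : ℕ) (T : ℕ → Finset ℕ) : ℕ → Finset ℕ := fun i =>
  if i = 1 then {1} else if 2 ≤ i ∧ i ≤ n then insert 1 ((T (i-1)).image (· + 1)) else ∅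

lemma mem_fA {n : ℕ} {S : ℕ → Finset ℕ} (hS : IsSmooth n S) {u j : ℕ}
    (hj : 1 ≤ j ∧ j ≤ n - 1) (hn : 1 ≤ n) :
    u ∈ fA n S j ↔ 1 ≤ u ∧ u + 1 ∈ S (j+1) := by
  have hamb := (hS.2.1 (j+1) (by omega) (by omega)).1
  unfold fA
  rw [if_pos hj]
  simp only [Finset.mem_image, Finset.mem_erase]
  constructor
  · rintro ⟨v, ⟨hv1, hv⟩, rfl⟩
    have := Finset.mem_Icc.1 (hamb hv)
    exact ⟨by omega, by rwa [show v - 1 + 1 = v by omega]⟩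
  · rintro ⟨hu, hmem⟩
    exact ⟨u+1, ⟨by omega, hmem⟩, by omega⟩

lemma mem_bA {n : ℕ} {T : ℕ → Finset ℕ} (hT : IsSmooth (n-1) T) {v i : ℕ}
    (hi : 2 ≤ i ∧ i ≤ n) :
    v ∈ bA n T i ↔ v = 1 ∨ (2 ≤ v ∧ v - 1 ∈ T (i-1)) := by
  have hamb := fun (h1 : 1 ≤ i - 1) (h2 : i - 1 ≤ n - 1) =>
    (hT.2.1 (i-1) h1 h2).1
  unfold bA
  rw [if_neg (by omega), if_pos hi]
  simp only [Finset.mem_insert, Finset.mem_image]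
  constructor
  · rintro (rfl | ⟨u, hu, rfl⟩)
    · exact Or.inl rfl
    · have := Finset.mem_Icc.1 (hamb (by omega) (by omega) hu)
      exact Or.inr ⟨by omega, by rwa [show u + 1 - 1 = u by omega]⟩
  · rintro (rfl | ⟨hv, hmem⟩)
    · exact Or.inl rfl
    · exact Or.inr ⟨v - 1, hmem, by omega⟩

lemma one_mem_of_smooth {n : ℕ} {S : ℕ → Finset ℕ} (hS : IsSmooth n S) (hS1 : S 1 = {1})
    {i : ℕ} (h1 : 1 ≤ i) (h2 : i ≤ n) : 1 ∈ S i :=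
  smooth_chain hS le_rfl h1 h2 (hS1 ▸ Finset.mem_singleton_self 1)

lemma fA_smooth {n : ℕ} {S : ℕ → Finset ℕ} (hn : 1 ≤ n) (hS : IsSmooth n S)
    (hS1 : S 1 = {1}) : IsSmooth (n-1) (fA n S) := by
  refine ⟨?_, ?_, ?_, ?_⟩
  · intro j hj; unfold fA; rw [if_neg (by omega)]
  · intro j hj1 hjn
    constructor
    · intro u hu
      rw [mem_fA hS ⟨hj1, hjn⟩ hn] at hu
      have := Finset.mem_Icc.1 ((hS.2.1 (j+1) (by omega) (by omega)).1 hu.2)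
      rw [Finset.mem_Icc]
      omega
    · unfold fA
      rw [if_pos ⟨hj1, hjn⟩]
      rw [Finset.card_image_of_injOn, Finset.card_erase_of_mem
        (one_mem_of_smooth hS hS1 (by omega) (by omega)),
        (hS.2.1 (j+1) (by omega) (by omega)).2]
      · omega
      · intro v hv w hw hvw
        have hv' := Finset.mem_Icc.1 ((hS.2.1 (j+1) (by omega) (by omega)).1
          (Finset.mem_of_mem_erase hv))
        have hw' := Finset.mem_Icc.1 ((hS.2.1 (j+1) (by omega) (by omega)).1
          (Finset.mem_of_mem_erase hw))
        have hvw' : v - 1 = w - 1 := hvw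
        omega
  · intro j hj1 hjlt
    intro u hu
    rw [mem_fA hS ⟨hj1, by omega⟩ hn] at hu
    rw [mem_fA hS ⟨by omega, by omega⟩ hn]
    exact ⟨hu.1, hS.2.2.1 (j+1) (by omega) (by omega) hu.2⟩
  · intro a b ha hab hbn hmem
    rw [mem_fA hS ⟨by omega, by omega⟩ hn] at hmem
    rw [mem_fA hS ⟨by omega, by omega⟩ hn]
    have := hS.2.2.2 (a+1) (b+1) (by omega) (by omega) (by omega) hmem.2
    exact ⟨by omega, by rwa [show a + 1 + 1 = a + 2 by omega] at this⟩

lemma bA_smooth {n : ℕ} {T : ℕ → Finset ℕ} (hn : 1 ≤ n) (hT : IsSmooth (n-1) T) :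
    IsSmooth n (bA n T) ∧ bA n T 1 = {1} := by
  have hb1 : bA n T 1 = {1} := by unfold bA; rw [if_pos rfl]
  have hTamb : ∀ j, 1 ≤ j → j ≤ n - 1 → T j ⊆ Finset.Icc 1 n := by
    intro j h1 h2
    have := (hT.2.1 j h1 h2).1
    rwa [show n - 1 + 1 = n by omega] at this
  refine ⟨⟨?_, ?_, ?_, ?_⟩, hb1⟩
  · intro i hi; unfold bA; rw [if_neg (by omega), if_neg (by omega)]
  · intro i hi1 hin
    by_cases h1 : i = 1
    · subst h1; rw [hb1]
      refine ⟨?_, by simp⟩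
      intro v hv; rw [Finset.mem_singleton] at hv; subst hv
      rw [Finset.mem_Icc]; omega
    · constructor
      · intro v hv
        rw [mem_bA hT ⟨by omega, hin⟩] at hv
        rcases hv with rfl | ⟨hv2, hv⟩
        · rw [Finset.mem_Icc]; omega
        · have := Finset.mem_Icc.1 (hTamb (i-1) (by omega) (by omega) hv)
          rw [Finset.mem_Icc]; omega
      · unfold bA
        rw [if_neg h1, if_pos ⟨by omega, hin⟩]
        rw [Finset.card_insert_of_notMem, Finset.card_image_of_injective _
          (fun a b hab => by omega), (hT.2.1 (i-1) (by omega) (by omega)).2]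
        · omega
        · intro hmem
          obtain ⟨u, hu, hu1⟩ := Finset.mem_image.1 hmem
          have := Finset.mem_Icc.1 (hTamb (i-1) (by omega) (by omega) hu)
          omega
  · intro i hi1 hilt
    intro v hv
    by_cases h1 : i = 1
    · subst h1; rw [hb1] at hv; rw [Finset.mem_singleton] at hv; subst hv
      rw [mem_bA hT ⟨by omega, by omega⟩]
      exact Or.inl rfl
    · rw [mem_bA hT ⟨by omega, by omega⟩] at hv
      rw [mem_bA hT ⟨by omega, by omega⟩]
      rcases hv with rfl | ⟨hv2, hv⟩
      · exact Or.inl rfl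
      · refine Or.inr ⟨hv2, ?_⟩
        have := hT.2.2.1 (i-1) (by omega) (by omega) hv
        rwa [show i - 1 + 1 = i + 1 - 1 by omega] at this
  · intro a b ha hab hbn hmem
    by_cases h1 : a = 1
    · subst h1; rw [hb1, Finset.mem_singleton] at hmem; omega
    · rw [mem_bA hT ⟨by omega, by omega⟩] at hmem
      rcases hmem with rfl | ⟨hb2, hmem⟩
      · omega
      · rw [mem_bA hT ⟨by omega, by omega⟩]
        refine Or.inr ⟨by omega, ?_⟩
        have := hT.2.2.2 (a-1) (b-1) (by omega) (by omega) (by omega) hmem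
        rwa [show a - 1 + 1 = a + 1 - 1 by omega] at this

lemma bA_fA {n : ℕ} {S : ℕ → Finset ℕ} (hn : 1 ≤ n) (hS : IsSmooth n S)
    (hS1 : S 1 = {1}) : bA n (fA n S) = S := by
  funext i
  by_cases h1 : i = 1
  · subst h1; unfold bA; rw [if_pos rfl, hS1]
  · by_cases h2 : 2 ≤ i ∧ i ≤ n
    · unfold bA
      rw [if_neg h1, if_pos h2]
      unfold fA
      rw [if_pos (by omega : 1 ≤ i - 1 ∧ i - 1 ≤ n - 1), show i - 1 + 1 = i by omega,
        Finset.image_image]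
      have : ((S i).erase 1).image ((· + 1) ∘ (· - 1)) = ((S i).erase 1).image id := by
        apply Finset.image_congr
        intro v hv
        have hv1 := Finset.mem_erase.1 hv
        have := Finset.mem_Icc.1 ((hS.2.1 i (by omega) (by omega)).1 hv1.2)
        simp only [Function.comp_apply, id_eq]
        omega
      rw [this, Finset.image_id, Finset.insert_erase
        (one_mem_of_smooth hS hS1 (by omega) (by omega))]
    · unfold bA
      rw [if_neg h1, if_neg h2, hS.1 i (by omega)]

lemma fA_bA {n : ℕ} {T : ℕ → Finset ℕ} (hn : 1 ≤ n) (hT : IsSmooth (n-1) T) :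
    fA n (bA n T) = T := by
  funext j
  by_cases hj : 1 ≤ j ∧ j ≤ n - 1
  · unfold fA
    rw [if_pos hj]
    unfold bA
    rw [if_neg (by omega), if_pos (by omega : 2 ≤ j + 1 ∧ j + 1 ≤ n),
      show j + 1 - 1 = j by omega]
    have h1n : 1 ∉ (T j).image (· + 1) := by
      intro hmem
      obtain ⟨u, hu, hu1⟩ := Finset.mem_image.1 hmem
      have := Finset.mem_Icc.1 ((hT.2.1 j hj.1 hj.2).1 hu)
      omega
    rw [Finset.erase_insert h1n, Finset.image_image]
    have : (T j).image ((· - 1) ∘ (· + 1)) = (T j).image id := by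
      apply Finset.image_congr
      intro v _
      simp only [Function.comp_apply, id_eq]
      omega
    rw [this, Finset.image_id]
  · unfold fA
    rw [if_neg hj, hT.1 j (by omega)]

lemma cardA (n : ℕ) (hn : 1 ≤ n) :
    {S : ℕ → Finset ℕ | IsSmooth n S ∧ S 1 = {1}}.ncard
      = {T : ℕ → Finset ℕ | IsSmooth (n-1) T}.ncard := by
  apply ncard_eq_of_equiv
  exact
    { toFun := fun S => ⟨fA n S.1, fA_smooth hn S.2.1 S.2.2⟩
      invFun := fun T => ⟨bA n T.1, (bA_smooth hn T.2).1, (bA_smooth hn T.2).2⟩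
      left_inv := fun S => Subtype.ext (bA_fA hn S.2.1 S.2.2)
      right_inv := fun T => Subtype.ext (fA_bA hn T.2) }

def fC (n : ℕ) (S : ℕ → Finset ℕ) : ℕ → Finset ℕ := fun j =>
  if 1 ≤ j ∧ j ≤ n-1 then
    ((S (j+1)).erase (n+1)).image (fun v => if v = 1 then n else v - 1) else ∅

def bC (n : ℕ) (T : ℕ → Finset ℕ) : ℕ → Finset ℕ := fun i =>
  if i = 1 then {n+1} else if 2 ≤ i ∧ i ≤ n then
    insert (n+1) ((T (i-1)).image (fun u => if u = n then 1 else u + 1)) else ∅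

lemma mem_fC {n : ℕ} {S : ℕ → Finset ℕ} (hS : IsSmooth n S) {u j : ℕ}
    (hj : 1 ≤ j ∧ j ≤ n - 1) (hn : 1 ≤ n) :
    u ∈ fC n S j ↔ (u = n ∧ 1 ∈ S (j+1)) ∨ (1 ≤ u ∧ u ≤ n - 1 ∧ u + 1 ∈ S (j+1)) := by
  have hamb := (hS.2.1 (j+1) (by omega) (by omega)).1
  unfold fC
  rw [if_pos hj]
  simp only [Finset.mem_image, Finset.mem_erase]
  constructor
  · rintro ⟨v, ⟨hv1, hv⟩, rfl⟩
    have := Finset.mem_Icc.1 (hamb hv)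
    by_cases h1 : v = 1
    · subst h1; rw [if_pos rfl]; exact Or.inl ⟨rfl, hv⟩
    · rw [if_neg h1]
      exact Or.inr ⟨by omega, by omega, by rwa [show v - 1 + 1 = v by omega]⟩
  · rintro (⟨rfl, hmem⟩ | ⟨hu1, hu2, hmem⟩)
    · exact ⟨1, ⟨by omega, hmem⟩, by rw [if_pos rfl]⟩
    · exact ⟨u+1, ⟨by omega, hmem⟩, by rw [if_neg (by omega)]; omega⟩

lemma mem_bC {n : ℕ} {T : ℕ → Finset ℕ} (hT : IsSmooth (n-1) T) {v i : ℕ}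
    (hi : 2 ≤ i ∧ i ≤ n) :
    v ∈ bC n T i ↔ v = n + 1 ∨ (v = 1 ∧ n ∈ T (i-1))
      ∨ (2 ≤ v ∧ v ≤ n ∧ v - 1 ∈ T (i-1)) := by
  have hamb : T (i-1) ⊆ Finset.Icc 1 n := by
    have := (hT.2.1 (i-1) (by omega) (by omega)).1
    rwa [show n - 1 + 1 = n by omega] at this
  unfold bC
  rw [if_neg (by omega), if_pos hi]
  simp only [Finset.mem_insert, Finset.mem_image]
  constructor
  · rintro (rfl | ⟨u, hu, rfl⟩)
    · exact Or.inl rfl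
    · have := Finset.mem_Icc.1 (hamb hu)
      by_cases h1 : u = n
      · subst h1; rw [if_pos rfl]; exact Or.inr (Or.inl ⟨rfl, hu⟩)
      · rw [if_neg h1]
        exact Or.inr (Or.inr ⟨by omega, by omega, by rwa [show u + 1 - 1 = u by omega]⟩)
  · rintro (rfl | ⟨rfl, hmem⟩ | ⟨hv2, hvn, hmem⟩)
    · exact Or.inl rfl
    · exact Or.inr ⟨n, hmem, by rw [if_pos rfl]⟩
    · refine Or.inr ⟨v - 1, hmem, ?_⟩
      rw [if_neg (by omega)]
      omega

lemma top_mem_of_smooth {n : ℕ} {S : ℕ → Finset ℕ} (hS : IsSmooth n S) (hS1 : S 1 = {n+1})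
    {i : ℕ} (h1 : 1 ≤ i) (h2 : i ≤ n) : n + 1 ∈ S i :=
  smooth_chain hS le_rfl h1 h2 (hS1 ▸ Finset.mem_singleton_self (n+1))

lemma fC_smooth {n : ℕ} {S : ℕ → Finset ℕ} (hn : 1 ≤ n) (hS : IsSmooth n S)
    (hS1 : S 1 = {n+1}) : IsSmooth (n-1) (fC n S) := by
  refine ⟨?_, ?_, ?_, ?_⟩
  · intro j hj; unfold fC; rw [if_neg (by omega)]
  · intro j hj1 hjn
    constructor
    · intro u hu
      rw [mem_fC hS ⟨hj1, hjn⟩ hn] at hu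
      rw [Finset.mem_Icc, show n - 1 + 1 = n by omega]
      rcases hu with ⟨rfl, -⟩ | ⟨h1, h2, -⟩ <;> omega
    · unfold fC
      rw [if_pos ⟨hj1, hjn⟩]
      rw [Finset.card_image_of_injOn, Finset.card_erase_of_mem
        (top_mem_of_smooth hS hS1 (by omega) (by omega)),
        (hS.2.1 (j+1) (by omega) (by omega)).2]
      · omega
      · intro v hv w hw hvw
        have hv' := Finset.mem_Icc.1 ((hS.2.1 (j+1) (by omega) (by omega)).1
          (Finset.mem_of_mem_erase hv))
        have hw' := Finset.mem_Icc.1 ((hS.2.1 (j+1) (by omega) (by omega)).1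
          (Finset.mem_of_mem_erase hw))
        have hvne := (Finset.mem_erase.1 hv).1
        have hwne := (Finset.mem_erase.1 hw).1
        have hvw' : (if v = 1 then n else v - 1) = (if w = 1 then n else w - 1) := hvw
        by_cases h1 : v = 1 <;> by_cases h2 : w = 1 <;>
          simp only [h1, h2, if_pos, if_neg, if_true, if_false] at hvw' <;> omega
  · intro j hj1 hjlt
    intro u hu
    rw [mem_fC hS ⟨hj1, by omega⟩ hn] at hu
    rw [mem_fC hS ⟨by omega, by omega⟩ hn]
    have hsub := hS.2.2.1 (j+1) (by omega) (by omega)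
    rcases hu with ⟨rfl, hmem⟩ | ⟨h1, h2, hmem⟩
    · exact Or.inl ⟨rfl, hsub hmem⟩
    · exact Or.inr ⟨h1, h2, hsub hmem⟩
  · intro a b ha hab hbn hmem
    rw [mem_fC hS ⟨by omega, by omega⟩ hn] at hmem
    rw [mem_fC hS ⟨by omega, by omega⟩ hn]
    rcases hmem with ⟨rfl, -⟩ | ⟨h1, h2, hmem⟩
    · omega
    · have := hS.2.2.2 (a+1) (b+1) (by omega) (by omega) (by omega) hmem
      exact Or.inr ⟨by omega, by omega, by rwa [show a + 1 + 1 = a + 2 by omega] at this⟩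

lemma bC_smooth {n : ℕ} {T : ℕ → Finset ℕ} (hn : 1 ≤ n) (hT : IsSmooth (n-1) T) :
    IsSmooth n (bC n T) ∧ bC n T 1 = {n+1} := by
  have hb1 : bC n T 1 = {n+1} := by unfold bC; rw [if_pos rfl]
  have hTamb : ∀ j, 1 ≤ j → j ≤ n - 1 → T j ⊆ Finset.Icc 1 n := by
    intro j h1 h2
    have := (hT.2.1 j h1 h2).1
    rwa [show n - 1 + 1 = n by omega] at this
  refine ⟨⟨?_, ?_, ?_, ?_⟩, hb1⟩
  · intro i hi; unfold bC; rw [if_neg (by omega), if_neg (by omega)]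
  · intro i hi1 hin
    by_cases h1 : i = 1
    · subst h1; rw [hb1]
      refine ⟨?_, by simp⟩
      intro v hv; rw [Finset.mem_singleton] at hv; subst hv
      rw [Finset.mem_Icc]; omega
    · constructor
      · intro v hv
        rw [mem_bC hT ⟨by omega, hin⟩] at hv
        rw [Finset.mem_Icc]
        rcases hv with rfl | ⟨rfl, -⟩ | ⟨h2, h3, -⟩ <;> omega
      · unfold bC
        rw [if_neg h1, if_pos ⟨by omega, hin⟩]
        rw [Finset.card_insert_of_notMem, Finset.card_image_of_injOn,
          (hT.2.1 (i-1) (by omega) (by omega)).2]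
        · omega
        · intro v hv w hw hvw
          have hv' := Finset.mem_Icc.1 (hTamb (i-1) (by omega) (by omega) hv)
          have hw' := Finset.mem_Icc.1 (hTamb (i-1) (by omega) (by omega) hw)
          have hvw' : (if v = n then 1 else v + 1) = (if w = n then 1 else w + 1) := hvw
          by_cases hv1 : v = n <;> by_cases hw1 : w = n <;>
            simp only [hv1, hw1, if_pos, if_neg, if_true, if_false] at hvw' <;> omega
        · intro hmem
          obtain ⟨u, hu, hu1⟩ := Finset.mem_image.1 hmem
          have := Finset.mem_Icc.1 (hTamb (i-1) (by omega) (by omega) hu)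
          by_cases h2 : u = n <;> simp only [h2, if_pos, if_neg, if_true, if_false] at hu1 <;>
            omega
  · intro i hi1 hilt
    intro v hv
    by_cases h1 : i = 1
    · subst h1; rw [hb1] at hv; rw [Finset.mem_singleton] at hv; subst hv
      rw [mem_bC hT ⟨by omega, by omega⟩]
      exact Or.inl rfl
    · rw [mem_bC hT ⟨by omega, by omega⟩] at hv
      rw [mem_bC hT ⟨by omega, by omega⟩]
      have hsub : T (i-1) ⊆ T (i+1-1) := by
        have := hT.2.2.1 (i-1) (by omega) (by omega)
        rwa [show i - 1 + 1 = i + 1 - 1 by omega] at this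
      rcases hv with rfl | ⟨rfl, hmem⟩ | ⟨h2, h3, hmem⟩
      · exact Or.inl rfl
      · exact Or.inr (Or.inl ⟨rfl, hsub hmem⟩)
      · exact Or.inr (Or.inr ⟨h2, h3, hsub hmem⟩)
  · intro a b ha hab hbn hmem
    by_cases h1 : a = 1
    · subst h1; rw [hb1, Finset.mem_singleton] at hmem; omega
    · rw [mem_bC hT ⟨by omega, by omega⟩] at hmem
      rcases hmem with rfl | ⟨rfl, hmem⟩ | ⟨hb2, hbn', hmem⟩
      · omega
      · omega
      · rw [mem_bC hT ⟨by omega, by omega⟩]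
        have := hT.2.2.2 (a-1) (b-1) (by omega) (by omega) (by omega) hmem
        rw [show a - 1 + 1 = a by omega] at this
        exact Or.inr (Or.inr ⟨by omega, by omega, by rwa [show a + 1 - 1 = a by omega]⟩)

lemma bC_fC {n : ℕ} {S : ℕ → Finset ℕ} (hn : 1 ≤ n) (hS : IsSmooth n S)
    (hS1 : S 1 = {n+1}) : bC n (fC n S) = S := by
  funext i
  by_cases h1 : i = 1
  · subst h1; unfold bC; rw [if_pos rfl, hS1]
  · by_cases h2 : 2 ≤ i ∧ i ≤ n
    · unfold bC
      rw [if_neg h1, if_pos h2]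
      unfold fC
      rw [if_pos (by omega : 1 ≤ i - 1 ∧ i - 1 ≤ n - 1), show i - 1 + 1 = i by omega,
        Finset.image_image]
      have : ((S i).erase (n+1)).image
          ((fun u => if u = n then 1 else u + 1) ∘ (fun v => if v = 1 then n else v - 1))
          = ((S i).erase (n+1)).image id := by
        apply Finset.image_congr
        intro v hv
        have hv1 := Finset.mem_erase.1 hv
        have := Finset.mem_Icc.1 ((hS.2.1 i (by omega) (by omega)).1 hv1.2)
        simp only [Function.comp_apply, id_eq]
        by_cases hv2 : v = 1
        · subst hv2; rw [if_pos rfl, if_pos rfl]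
        · rw [if_neg hv2, if_neg (by omega)]
          omega
      rw [this, Finset.image_id, Finset.insert_erase
        (top_mem_of_smooth hS hS1 (by omega) (by omega))]
    · unfold bC
      rw [if_neg h1, if_neg h2, hS.1 i (by omega)]

lemma fC_bC {n : ℕ} {T : ℕ → Finset ℕ} (hn : 1 ≤ n) (hT : IsSmooth (n-1) T) :
    fC n (bC n T) = T := by
  funext j
  by_cases hj : 1 ≤ j ∧ j ≤ n - 1
  · unfold fC
    rw [if_pos hj]
    unfold bC
    rw [if_neg (by omega), if_pos (by omega : 2 ≤ j + 1 ∧ j + 1 ≤ n),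
      show j + 1 - 1 = j by omega]
    have hTamb : T j ⊆ Finset.Icc 1 n := by
      have := (hT.2.1 j hj.1 hj.2).1
      rwa [show n - 1 + 1 = n by omega] at this
    have h1n : n + 1 ∉ (T j).image (fun u => if u = n then 1 else u + 1) := by
      intro hmem
      obtain ⟨u, hu, hu1⟩ := Finset.mem_image.1 hmem
      have := Finset.mem_Icc.1 (hTamb hu)
      by_cases h2 : u = n <;> simp only [h2, if_pos, if_neg, if_true, if_false] at hu1 <;> omega
    rw [Finset.erase_insert h1n, Finset.image_image]
    have : (T j).image
        ((fun v => if v = 1 then n else v - 1) ∘ (fun u => if u = n then 1 else u + 1))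
        = (T j).image id := by
      apply Finset.image_congr
      intro v hv
      have := Finset.mem_Icc.1 (hTamb hv)
      simp only [Function.comp_apply, id_eq]
      by_cases hv2 : v = n
      · subst hv2; rw [if_pos rfl, if_pos rfl]
      · rw [if_neg hv2, if_neg (by omega)]
        omega
    rw [this, Finset.image_id]
  · unfold fC
    rw [if_neg hj, hT.1 j (by omega)]

lemma cardC (n : ℕ) (hn : 1 ≤ n) :
    {S : ℕ → Finset ℕ | IsSmooth n S ∧ S 1 = {n+1}}.ncard
      = {T : ℕ → Finset ℕ | IsSmooth (n-1) T}.ncard := by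
  apply ncard_eq_of_equiv
  exact
    { toFun := fun S => ⟨fC n S.1, fC_smooth hn S.2.1 S.2.2⟩
      invFun := fun T => ⟨bC n T.1, (bC_smooth hn T.2).1, (bC_smooth hn T.2).2⟩
      left_inv := fun S => Subtype.ext (bC_fC hn S.2.1 S.2.2)
      right_inv := fun T => Subtype.ext (fC_bC hn T.2) }

/-! ### Case `2 ≤ c ≤ n` -/

-- value relabelings
def rl1 (c x v : ℕ) : ℕ := if v = x then c - 1 else v - 1
def rl1i (c x u : ℕ) : ℕ := if u = c - 1 then x else u + 1
def rl2 (c v : ℕ) : ℕ := if v = 1 then 1 else v - c + 1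
def rl2i (c u : ℕ) : ℕ := if u = 1 then 1 else u + c - 1

def xof (c : ℕ) (S : ℕ → Finset ℕ) : ℕ := ∑ v ∈ S c \ Finset.Icc 2 c, v

def xofU (c : ℕ) (U : ℕ → Finset ℕ) : ℕ := ∑ u ∈ U 1, rl2i c u

def fB (c x : ℕ) (S : ℕ → Finset ℕ) : ℕ → Finset ℕ := fun j =>
  if 1 ≤ j ∧ j ≤ c - 2 then ((S (j+1)).erase c).image (rl1 c x) else ∅

def gB (n c : ℕ) (S : ℕ → Finset ℕ) : ℕ → Finset ℕ := fun j =>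
  if 1 ≤ j ∧ j ≤ n - c + 1 then (S (c+j-1) \ Finset.Icc 2 c).image (rl2 c) else ∅

def bB (n c x : ℕ) (T U : ℕ → Finset ℕ) : ℕ → Finset ℕ := fun i =>
  if i = 1 then {c}
  else if 2 ≤ i ∧ i ≤ c - 1 then insert c ((T (i-1)).image (rl1i c x))
  else if c ≤ i ∧ i ≤ n then Finset.Icc 2 c ∪ (U (i-c+1)).image (rl2i c)
  else ∅

section CaseB

variable {n c : ℕ} {S : ℕ → Finset ℕ}

lemma Icc_subset_Sc (hc : 2 ≤ c) (hcn : c ≤ n) (hS : IsSmooth n S) (hS1 : S 1 = {c}) :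
    Finset.Icc 2 c ⊆ S c := by
  intro v hv
  rw [Finset.mem_Icc] at hv
  have hcmem : c ∈ S (v-1) :=
    smooth_chain hS le_rfl (by omega) (by omega) (hS1 ▸ Finset.mem_singleton_self c)
  have := hS.2.2.2 (v-1) c (by omega) (by omega) hcn hcmem
  rwa [show v - 1 + 1 = v by omega] at this

lemma x_spec (hc : 2 ≤ c) (hcn : c ≤ n) (hS : IsSmooth n S) (hS1 : S 1 = {c}) :
    S c = insert (xof c S) (Finset.Icc 2 c)
      ∧ (xof c S = 1 ∨ (c + 1 ≤ xof c S ∧ xof c S ≤ n + 1))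
      ∧ S c \ Finset.Icc 2 c = {xof c S} := by
  have hsub := Icc_subset_Sc hc hcn hS hS1
  have hamb := (hS.2.1 c (by omega) hcn).1
  have hcard : (S c \ Finset.Icc 2 c).card = 1 := by
    rw [Finset.card_sdiff_of_subset hsub, (hS.2.1 c (by omega) hcn).2, Nat.card_Icc]
    omega
  obtain ⟨y, hy⟩ := Finset.card_eq_one.1 hcard
  have hxy : xof c S = y := by rw [xof, hy, Finset.sum_singleton]
  have hymem : y ∈ S c \ Finset.Icc 2 c := hy ▸ Finset.mem_singleton_self y
  rw [Finset.mem_sdiff, Finset.mem_Icc] at hymem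
  have hyamb := Finset.mem_Icc.1 (hamb hymem.1)
  refine ⟨?_, by rw [hxy]; omega, by rw [hxy, hy]⟩
  rw [hxy]
  ext v
  rw [Finset.mem_insert]
  constructor
  · intro hv
    by_cases h : v ∈ Finset.Icc 2 c
    · exact Or.inr h
    · left
      have : v ∈ S c \ Finset.Icc 2 c := Finset.mem_sdiff.2 ⟨hv, h⟩
      rw [hy, Finset.mem_singleton] at this
      exact this
  · rintro (rfl | hv)
    · exact hymem.1
    · exact hsub hv

variable {x : ℕ}

lemma mem_fB (hc : 2 ≤ c) (hcn : c ≤ n) (hS : IsSmooth n S)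
    (hx : x = 1 ∨ (c + 1 ≤ x ∧ x ≤ n + 1)) (hxSc : S c = insert x (Finset.Icc 2 c))
    (hS1 : S 1 = {c}) {u j : ℕ} (hj : 1 ≤ j ∧ j ≤ c - 2) :
    u ∈ fB c x S j ↔ (u = c - 1 ∧ x ∈ S (j+1)) ∨ (1 ≤ u ∧ u ≤ c - 2 ∧ u + 1 ∈ S (j+1)) := by
  have hshape : S (j+1) ⊆ insert x (Finset.Icc 2 c) :=
    hxSc ▸ smooth_chain hS (by omega) (by omega) hcn
  unfold fB
  rw [if_pos hj]
  simp only [Finset.mem_image, Finset.mem_erase]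
  constructor
  · rintro ⟨v, ⟨hvne, hv⟩, rfl⟩
    have hv' := hshape hv
    rw [Finset.mem_insert, Finset.mem_Icc] at hv'
    rcases hv' with rfl | hv'
    · rw [rl1, if_pos rfl]; exact Or.inl ⟨rfl, hv⟩
    · rw [rl1, if_neg (by omega)]
      exact Or.inr ⟨by omega, by omega, by rwa [show v - 1 + 1 = v by omega]⟩
  · rintro (⟨rfl, hmem⟩ | ⟨hu1, hu2, hmem⟩)
    · exact ⟨x, ⟨by omega, hmem⟩, by rw [rl1, if_pos rfl]⟩
    · refine ⟨u + 1, ⟨by omega, hmem⟩, ?_⟩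
      rw [rl1, if_neg (by omega)]
      omega

lemma mem_gB (hc : 2 ≤ c) (hcn : c ≤ n) (hS : IsSmooth n S) {u j : ℕ}
    (hj : 1 ≤ j ∧ j ≤ n - c + 1) :
    u ∈ gB n c S j ↔ (u = 1 ∧ 1 ∈ S (c+j-1))
      ∨ (2 ≤ u ∧ u ≤ n - c + 2 ∧ u + c - 1 ∈ S (c+j-1)) := by
  have hamb := (hS.2.1 (c+j-1) (by omega) (by omega)).1
  unfold gB
  rw [if_pos hj]
  simp only [Finset.mem_image, Finset.mem_sdiff, Finset.mem_Icc]
  constructor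
  · rintro ⟨v, ⟨hv, hvI⟩, rfl⟩
    have hv' := Finset.mem_Icc.1 (hamb hv)
    by_cases h1 : v = 1
    · subst h1; rw [rl2, if_pos rfl]; exact Or.inl ⟨rfl, hv⟩
    · rw [rl2, if_neg h1]
      refine Or.inr ⟨by omega, by omega, by rwa [show v - c + 1 + c - 1 = v by omega]⟩
  · rintro (⟨rfl, hmem⟩ | ⟨hu1, hu2, hmem⟩)
    · exact ⟨1, ⟨hmem, by omega⟩, by rw [rl2, if_pos rfl]⟩
    · refine ⟨u + c - 1, ⟨hmem, by omega⟩, ?_⟩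
      rw [rl2, if_neg (by omega)]
      omega

lemma fB_smooth (hc : 2 ≤ c) (hcn : c ≤ n) (hS : IsSmooth n S)
    (hx : x = 1 ∨ (c + 1 ≤ x ∧ x ≤ n + 1)) (hxSc : S c = insert x (Finset.Icc 2 c))
    (hS1 : S 1 = {c}) : IsSmooth (c-2) (fB c x S) := by
  have hcS : ∀ i, 1 ≤ i → i ≤ n → c ∈ S i := fun i h1 h2 =>
    smooth_chain hS le_rfl h1 h2 (hS1 ▸ Finset.mem_singleton_self c)
  refine ⟨?_, ?_, ?_, ?_⟩
  · intro j hj; unfold fB; rw [if_neg (by omega)]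
  · intro j hj1 hjn
    constructor
    · intro u hu
      rw [mem_fB hc hcn hS hx hxSc hS1 ⟨hj1, hjn⟩] at hu
      rw [Finset.mem_Icc, show c - 2 + 1 = c - 1 by omega]
      rcases hu with ⟨rfl, -⟩ | ⟨h1, h2, -⟩ <;> omega
    · unfold fB
      rw [if_pos ⟨hj1, hjn⟩]
      have hshape : S (j+1) ⊆ insert x (Finset.Icc 2 c) :=
        hxSc ▸ smooth_chain hS (by omega) (by omega) hcn
      rw [Finset.card_image_of_injOn, Finset.card_erase_of_mem (hcS (j+1) (by omega) (by omega)),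
        (hS.2.1 (j+1) (by omega) (by omega)).2]
      · omega
      · intro v hv w hw hvw
        have hv' := hshape (Finset.mem_of_mem_erase hv)
        have hw' := hshape (Finset.mem_of_mem_erase hw)
        rw [Finset.mem_insert, Finset.mem_Icc] at hv' hw'
        have hvne := (Finset.mem_erase.1 hv).1
        have hwne := (Finset.mem_erase.1 hw).1
        have hvw' : (if v = x then c - 1 else v - 1) = (if w = x then c - 1 else w - 1) := hvw
        by_cases h1 : v = x <;> by_cases h2 : w = x <;>
          simp only [h1, h2, if_pos, if_neg, if_true, if_false] at hvw' <;> omega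
  · intro j hj1 hjlt
    intro u hu
    rw [mem_fB hc hcn hS hx hxSc hS1 ⟨hj1, by omega⟩] at hu
    rw [mem_fB hc hcn hS hx hxSc hS1 ⟨by omega, by omega⟩]
    have hsub := hS.2.2.1 (j+1) (by omega) (by omega)
    rcases hu with ⟨rfl, hmem⟩ | ⟨h1, h2, hmem⟩
    · exact Or.inl ⟨rfl, hsub hmem⟩
    · exact Or.inr ⟨h1, h2, hsub hmem⟩
  · intro a b ha hab hbn hmem
    rw [mem_fB hc hcn hS hx hxSc hS1 ⟨by omega, by omega⟩] at hmem
    rw [mem_fB hc hcn hS hx hxSc hS1 ⟨by omega, by omega⟩]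
    rcases hmem with ⟨rfl, -⟩ | ⟨h1, h2, hmem⟩
    · omega
    · have := hS.2.2.2 (a+1) (b+1) (by omega) (by omega) (by omega) hmem
      exact Or.inr ⟨by omega, by omega, by rwa [show a + 1 + 1 = a + 2 by omega] at this⟩

lemma gB_smooth (hc : 2 ≤ c) (hcn : c ≤ n) (hS : IsSmooth n S) (hS1 : S 1 = {c}) :
    IsSmooth (n-c+1) (gB n c S) := by
  have hsub0 := Icc_subset_Sc hc hcn hS hS1
  refine ⟨?_, ?_, ?_, ?_⟩
  · intro j hj; unfold gB; rw [if_neg (by omega)]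
  · intro j hj1 hjn
    have hsubIcc : Finset.Icc 2 c ⊆ S (c+j-1) :=
      hsub0.trans (smooth_chain hS (by omega) (by omega) (by omega))
    constructor
    · intro u hu
      rw [mem_gB hc hcn hS ⟨hj1, hjn⟩] at hu
      rw [Finset.mem_Icc, show n - c + 1 + 1 = n - c + 2 by omega]
      rcases hu with ⟨rfl, -⟩ | ⟨h1, h2, -⟩ <;> omega
    · unfold gB
      rw [if_pos ⟨hj1, hjn⟩]
      have hamb := (hS.2.1 (c+j-1) (by omega) (by omega)).1
      rw [Finset.card_image_of_injOn, Finset.card_sdiff_of_subset hsubIcc,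
        (hS.2.1 (c+j-1) (by omega) (by omega)).2, Nat.card_Icc]
      · omega
      · intro v hv w hw hvw
        rw [Finset.coe_sdiff, Set.mem_diff] at hv hw
        have hv' := Finset.mem_Icc.1 (hamb hv.1)
        have hw' := Finset.mem_Icc.1 (hamb hw.1)
        have hvI : ¬ (2 ≤ v ∧ v ≤ c) := by
          intro h; exact hv.2 (by rw [Finset.coe_Icc, Set.mem_Icc]; omega)
        have hwI : ¬ (2 ≤ w ∧ w ≤ c) := by
          intro h; exact hw.2 (by rw [Finset.coe_Icc, Set.mem_Icc]; omega)
        have hvw' : (if v = 1 then 1 else v - c + 1) = (if w = 1 then 1 else w - c + 1) := hvw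
        by_cases h1 : v = 1 <;> by_cases h2 : w = 1 <;>
          simp only [h1, h2, if_pos, if_neg, if_true, if_false] at hvw' <;> omega
  · intro j hj1 hjlt
    intro u hu
    rw [mem_gB hc hcn hS ⟨hj1, by omega⟩] at hu
    rw [mem_gB hc hcn hS ⟨by omega, by omega⟩]
    have hsub : S (c+j-1) ⊆ S (c+(j+1)-1) := by
      have := hS.2.2.1 (c+j-1) (by omega) (by omega)
      rwa [show c + j - 1 + 1 = c + (j+1) - 1 by omega] at this
    rcases hu with ⟨rfl, hmem⟩ | ⟨h1, h2, hmem⟩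
    · exact Or.inl ⟨rfl, hsub hmem⟩
    · exact Or.inr ⟨h1, h2, hsub hmem⟩
  · intro a b ha hab hbn hmem
    rw [mem_gB hc hcn hS ⟨by omega, by omega⟩] at hmem
    rw [mem_gB hc hcn hS ⟨by omega, by omega⟩]
    rcases hmem with ⟨rfl, -⟩ | ⟨h1, h2, hmem⟩
    · omega
    · have := hS.2.2.2 (c+a-1) (c+b-1) (by omega) (by omega) (by omega)
        (by rwa [show b + c - 1 = c + b - 1 by omega] at hmem)
      rw [show c + a - 1 + 1 = (a + 1) + c - 1 by omega] at this
      exact Or.inr ⟨by omega, by omega, this⟩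

variable {T U : ℕ → Finset ℕ}

lemma xofU_spec (hc : 2 ≤ c) (hcn : c ≤ n) (hU : IsSmooth (n-c+1) U) :
    U 1 = {rl2 c (xofU c U)}
      ∧ (xofU c U = 1 ∨ (c + 1 ≤ xofU c U ∧ xofU c U ≤ n + 1)) := by
  obtain ⟨u₁, hu₁⟩ := Finset.card_eq_one.1 (hU.2.1 1 le_rfl (by omega)).2
  have hu₁amb : u₁ ∈ Finset.Icc 1 (n-c+1+1) :=
    (hU.2.1 1 le_rfl (by omega)).1 (hu₁ ▸ Finset.mem_singleton_self u₁)
  rw [Finset.mem_Icc] at hu₁amb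
  have hx : xofU c U = rl2i c u₁ := by rw [xofU, hu₁, Finset.sum_singleton]
  by_cases h1 : u₁ = 1
  · subst h1
    rw [hx, rl2i, if_pos rfl]
    refine ⟨by rw [hu₁, rl2, if_pos rfl], Or.inl rfl⟩
  · rw [hx, rl2i, if_neg h1]
    constructor
    · rw [hu₁, rl2, if_neg (by omega), show u₁ + c - 1 - c + 1 = u₁ by omega]
    · exact Or.inr ⟨by omega, by omega⟩

lemma mem_bB_mid (hc : 2 ≤ c) {v i : ℕ} (hi : 2 ≤ i ∧ i ≤ c - 1)
    (hTamb : T (i-1) ⊆ Finset.Icc 1 (c-1)) :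
    v ∈ bB n c x T U i ↔ v = c ∨ (v = x ∧ c - 1 ∈ T (i-1))
      ∨ (2 ≤ v ∧ v ≤ c - 1 ∧ v - 1 ∈ T (i-1)) := by
  unfold bB
  rw [if_neg (by omega), if_pos hi]
  simp only [Finset.mem_insert, Finset.mem_image]
  constructor
  · rintro (rfl | ⟨u, hu, rfl⟩)
    · exact Or.inl rfl
    · have hu' := Finset.mem_Icc.1 (hTamb hu)
      by_cases h1 : u = c - 1
      · subst h1; rw [rl1i, if_pos rfl]; exact Or.inr (Or.inl ⟨rfl, hu⟩)
      · rw [rl1i, if_neg h1]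
        exact Or.inr (Or.inr ⟨by omega, by omega, by rwa [show u + 1 - 1 = u by omega]⟩)
  · rintro (rfl | ⟨rfl, hmem⟩ | ⟨h2, h3, hmem⟩)
    · exact Or.inl rfl
    · exact Or.inr ⟨c-1, hmem, by rw [rl1i, if_pos rfl]⟩
    · refine Or.inr ⟨v - 1, hmem, ?_⟩
      rw [rl1i, if_neg (by omega)]
      omega

lemma mem_bB_high (hc : 2 ≤ c) {v i : ℕ} (hi : c ≤ i ∧ i ≤ n)
    (hUamb : U (i-c+1) ⊆ Finset.Icc 1 (n-c+2)) :
    v ∈ bB n c x T U i ↔ (2 ≤ v ∧ v ≤ c) ∨ (v = 1 ∧ 1 ∈ U (i-c+1))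
      ∨ (c + 1 ≤ v ∧ v ≤ n + 1 ∧ v - c + 1 ∈ U (i-c+1)) := by
  unfold bB
  rw [if_neg (by omega), if_neg (by omega), if_pos hi]
  simp only [Finset.mem_union, Finset.mem_Icc, Finset.mem_image]
  constructor
  · rintro (h | ⟨u, hu, rfl⟩)
    · exact Or.inl h
    · have hu' := Finset.mem_Icc.1 (hUamb hu)
      by_cases h1 : u = 1
      · subst h1; rw [rl2i, if_pos rfl]; exact Or.inr (Or.inl ⟨rfl, hu⟩)
      · rw [rl2i, if_neg h1]
        refine Or.inr (Or.inr ⟨by omega, by omega, by rwa [show u + c - 1 - c + 1 = u by omega]⟩)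
  · rintro (h | ⟨rfl, hmem⟩ | ⟨h2, h3, hmem⟩)
    · exact Or.inl h
    · exact Or.inr ⟨1, hmem, by rw [rl2i, if_pos rfl]⟩
    · refine Or.inr ⟨v - c + 1, hmem, ?_⟩
      rw [rl2i, if_neg (by omega)]
      omega

lemma bB_smooth (hc : 2 ≤ c) (hcn : c ≤ n) (hT : IsSmooth (c-2) T)
    (hU : IsSmooth (n-c+1) U) :
    IsSmooth n (bB n c (xofU c U) T U) ∧ bB n c (xofU c U) T U 1 = {c} := by
  obtain ⟨hU1, hx⟩ := xofU_spec hc hcn hU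
  set x := xofU c U with hxdef
  have hb1 : bB n c x T U 1 = {c} := by unfold bB; rw [if_pos rfl]
  have hTamb : ∀ j, 1 ≤ j → j ≤ c - 2 → T j ⊆ Finset.Icc 1 (c-1) := by
    intro j h1 h2
    have := (hT.2.1 j h1 h2).1
    rwa [show c - 2 + 1 = c - 1 by omega] at this
  have hUamb : ∀ j, 1 ≤ j → j ≤ n - c + 1 → U j ⊆ Finset.Icc 1 (n-c+2) := by
    intro j h1 h2
    have := (hU.2.1 j h1 h2).1
    rwa [show n - c + 1 + 1 = n - c + 2 by omega] at this
  have hu1 : ∀ j, 1 ≤ j → j ≤ n - c + 1 → rl2 c x ∈ U j := fun j h1 h2 =>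
    smooth_chain hU le_rfl h1 h2 (hU1 ▸ Finset.mem_singleton_self _)
  refine ⟨⟨?_, ?_, ?_, ?_⟩, hb1⟩
  · intro i hi; unfold bB
    rw [if_neg (by omega), if_neg (by omega), if_neg (by omega)]
  · intro i hi1 hin
    by_cases h1 : i = 1
    · subst h1; rw [hb1]
      constructor
      · intro v hv; rw [Finset.mem_singleton] at hv; subst hv; rw [Finset.mem_Icc]; omega
      · simp
    · by_cases h2 : i ≤ c - 1
      · constructor
        · intro v hv
          rw [mem_bB_mid hc ⟨by omega, h2⟩ (hTamb (i-1) (by omega) (by omega))] at hv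
          rw [Finset.mem_Icc]
          rcases hv with rfl | ⟨rfl, -⟩ | ⟨h3, h4, -⟩ <;> omega
        · unfold bB
          rw [if_neg h1, if_pos ⟨by omega, h2⟩]
          rw [Finset.card_insert_of_notMem, Finset.card_image_of_injOn,
            (hT.2.1 (i-1) (by omega) (by omega)).2]
          · omega
          · intro u hu w hw huw
            have hu' := Finset.mem_Icc.1 (hTamb (i-1) (by omega) (by omega) hu)
            have hw' := Finset.mem_Icc.1 (hTamb (i-1) (by omega) (by omega) hw)
            have huw' : (if u = c - 1 then x else u + 1) = (if w = c - 1 then x else w + 1) := huw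
            by_cases hu1' : u = c - 1 <;> by_cases hw1 : w = c - 1 <;>
              simp only [hu1', hw1, if_pos, if_neg, if_true, if_false] at huw' <;> omega
          · intro hmem
            obtain ⟨u, hu, hu'⟩ := Finset.mem_image.1 hmem
            have := Finset.mem_Icc.1 (hTamb (i-1) (by omega) (by omega) hu)
            rw [rl1i] at hu'
            by_cases h3 : u = c - 1 <;>
              simp only [h3, if_pos, if_neg, if_true, if_false] at hu' <;> omega
      · constructor
        · intro v hv
          rw [mem_bB_high hc ⟨by omega, hin⟩ (hUamb (i-c+1) (by omega) (by omega))] at hv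
          rw [Finset.mem_Icc]
          rcases hv with ⟨h3, h4⟩ | ⟨rfl, -⟩ | ⟨h3, h4, -⟩ <;> omega
        · unfold bB
          rw [if_neg h1, if_neg (by omega), if_pos ⟨by omega, hin⟩]
          rw [Finset.card_union_of_disjoint, Finset.card_image_of_injOn,
            (hU.2.1 (i-c+1) (by omega) (by omega)).2, Nat.card_Icc]
          · omega
          · intro u hu w hw huw
            have hu' := Finset.mem_Icc.1 (hUamb (i-c+1) (by omega) (by omega) hu)
            have hw' := Finset.mem_Icc.1 (hUamb (i-c+1) (by omega) (by omega) hw)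
            have huw' : (if u = 1 then 1 else u + c - 1) = (if w = 1 then 1 else w + c - 1) := huw
            by_cases hu1' : u = 1 <;> by_cases hw1 : w = 1 <;>
              simp only [hu1', hw1, if_pos, if_neg, if_true, if_false] at huw' <;> omega
          · rw [Finset.disjoint_left]
            intro v hv hv'
            rw [Finset.mem_Icc] at hv
            obtain ⟨u, hu, hu'⟩ := Finset.mem_image.1 hv'
            have := Finset.mem_Icc.1 (hUamb (i-c+1) (by omega) (by omega) hu)
            rw [rl2i] at hu'
            by_cases h3 : u = 1 <;>
              simp only [h3, if_pos, if_neg, if_true, if_false] at hu' <;> omega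
  · intro i hi1 hilt
    intro v hv
    by_cases h2 : i + 1 ≤ c - 1
    · rw [mem_bB_mid hc ⟨by omega, h2⟩ (hTamb i (by omega) (by omega))]
      by_cases h1 : i = 1
      · subst h1; rw [hb1, Finset.mem_singleton] at hv
        exact Or.inl hv
      · rw [mem_bB_mid hc ⟨by omega, by omega⟩ (hTamb (i-1) (by omega) (by omega))] at hv
        have hsub : T (i-1) ⊆ T i := by
          have := hT.2.2.1 (i-1) (by omega) (by omega)
          rwa [show i - 1 + 1 = i by omega] at this
        have hidx : i + 1 - 1 = i := by omega
        rw [hidx]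
        rcases hv with rfl | ⟨rfl, hmem⟩ | ⟨h3, h4, hmem⟩
        · exact Or.inl rfl
        · exact Or.inr (Or.inl ⟨rfl, hsub hmem⟩)
        · exact Or.inr (Or.inr ⟨h3, h4, hsub hmem⟩)
    · rw [mem_bB_high hc ⟨by omega, by omega⟩ (hUamb (i+1-c+1) (by omega) (by omega))]
      by_cases h3 : i ≤ c - 1
      · -- i = c-1 (or i = 1 with c = 2): source is {c} or mid branch
        have hv' : v = c ∨ (v = x ∧ c - 1 ∈ T (i-1)) ∨ (2 ≤ v ∧ v ≤ c - 1 ∧ v - 1 ∈ T (i-1)) := by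
          by_cases h1 : i = 1
          · subst h1; rw [hb1, Finset.mem_singleton] at hv; exact Or.inl hv
          · rw [mem_bB_mid hc ⟨by omega, by omega⟩ (hTamb (i-1) (by omega) (by omega))] at hv
            exact hv
        have hidx : i + 1 - c + 1 = 1 := by omega
        rw [hidx]
        rcases hv' with rfl | ⟨rfl, hmem⟩ | ⟨h4, h5, hmem⟩
        · exact Or.inl ⟨hc, le_rfl⟩
        · rcases hx with hx1 | hx1
          · refine Or.inr (Or.inl ⟨hx1, ?_⟩)
            have := hu1 1 le_rfl (by omega)
            rwa [hx1, rl2, if_pos rfl] at this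
          · refine Or.inr (Or.inr ⟨hx1.1, hx1.2, ?_⟩)
            have := hu1 1 le_rfl (by omega)
            rwa [rl2, if_neg (by omega)] at this
        · exact Or.inl ⟨h4, by omega⟩
      · -- c ≤ i : source high branch
        rw [mem_bB_high hc ⟨by omega, by omega⟩ (hUamb (i-c+1) (by omega) (by omega))] at hv
        have hsub : U (i-c+1) ⊆ U (i+1-c+1) := by
          have := hU.2.2.1 (i-c+1) (by omega) (by omega)
          rwa [show i - c + 1 + 1 = i + 1 - c + 1 by omega] at this
        rcases hv with h | ⟨rfl, hmem⟩ | ⟨h4, h5, hmem⟩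
        · exact Or.inl h
        · exact Or.inr (Or.inl ⟨rfl, hsub hmem⟩)
        · exact Or.inr (Or.inr ⟨h4, h5, hsub hmem⟩)
  · intro a b ha hab hbn hv
    by_cases ha1 : a = 1
    · subst ha1
      rw [hb1, Finset.mem_singleton] at hv
      rw [mem_bB_high hc ⟨by omega, by omega⟩ (hUamb (b-c+1) (by omega) (by omega))]
      exact Or.inl ⟨le_rfl, by omega⟩
    · by_cases ha2 : a ≤ c - 1
      · rw [mem_bB_mid hc ⟨by omega, ha2⟩ (hTamb (a-1) (by omega) (by omega))] at hv
        rcases hv with hbc' | ⟨hbx, hmem⟩ | ⟨hb2, hbc, hmem⟩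
        · rw [mem_bB_high hc ⟨by omega, by omega⟩ (hUamb (b-c+1) (by omega) (by omega))]
          exact Or.inl ⟨by omega, by omega⟩
        · -- b = x
          have hxb : c + 1 ≤ b := by
            rcases hx with h | h
            · omega
            · omega
          rw [mem_bB_high hc ⟨by omega, hbn⟩ (hUamb (b-c+1) (by omega) (by omega))]
          exact Or.inl ⟨by omega, by omega⟩
        · have := hT.2.2.2 (a-1) (b-1) (by omega) (by omega) (by omega) hmem
          rw [show a - 1 + 1 = a by omega] at this
          rw [mem_bB_mid hc ⟨by omega, by omega⟩ (hTamb (b-1) (by omega) (by omega))]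
          exact Or.inr (Or.inr ⟨by omega, by omega, by rwa [show a + 1 - 1 = a by omega]⟩)
      · rw [mem_bB_high hc ⟨by omega, by omega⟩ (hUamb (a-c+1) (by omega) (by omega))] at hv
        rcases hv with h | ⟨rfl, hmem⟩ | ⟨hb2, hbc, hmem⟩
        · omega
        · omega
        · have := hU.2.2.2 (a-c+1) (b-c+1) (by omega) (by omega) (by omega) hmem
          rw [mem_bB_high hc ⟨by omega, hbn⟩ (hUamb (b-c+1) (by omega) (by omega))]
          refine Or.inr (Or.inr ⟨by omega, by omega, ?_⟩)
          rwa [show a + 1 - c + 1 = a - c + 1 + 1 by omega]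

lemma xofU_gB (hc : 2 ≤ c) (hcn : c ≤ n) (hS : IsSmooth n S) (hS1 : S 1 = {c}) :
    xofU c (gB n c S) = xof c S := by
  obtain ⟨hxSc, hx, hD⟩ := x_spec hc hcn hS hS1
  have hgB1 : gB n c S 1 = {rl2 c (xof c S)} := by
    unfold gB
    rw [if_pos ⟨le_rfl, by omega⟩, show c + 1 - 1 = c by omega, hD, Finset.image_singleton]
  rw [xofU, hgB1, Finset.sum_singleton]
  rcases hx with h1 | h1
  · rw [h1, rl2, if_pos rfl, rl2i, if_pos rfl]
  · rw [rl2, if_neg (by omega), rl2i, if_neg (by omega)]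
    omega

lemma bB_round (hc : 2 ≤ c) (hcn : c ≤ n) (hS : IsSmooth n S) (hS1 : S 1 = {c}) :
    bB n c (xof c S) (fB c (xof c S) S) (gB n c S) = S := by
  obtain ⟨hxSc, hx, hD⟩ := x_spec hc hcn hS hS1
  set x := xof c S with hxdef
  have hcS : ∀ i, 1 ≤ i → i ≤ n → c ∈ S i := fun i h1 h2 =>
    smooth_chain hS le_rfl h1 h2 (hS1 ▸ Finset.mem_singleton_self c)
  funext i
  by_cases h1 : i = 1
  · subst h1; unfold bB; rw [if_pos rfl, hS1]
  · by_cases h2 : 2 ≤ i ∧ i ≤ c - 1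
    · unfold bB
      rw [if_neg h1, if_pos h2]
      unfold fB
      rw [if_pos (by omega : 1 ≤ i - 1 ∧ i - 1 ≤ c - 2), show i - 1 + 1 = i by omega,
        Finset.image_image]
      have hshape : S i ⊆ insert x (Finset.Icc 2 c) :=
        hxSc ▸ smooth_chain hS (by omega) (by omega) hcn
      have hcongr : ((S i).erase c).image (rl1i c x ∘ rl1 c x)
          = ((S i).erase c).image id := by
        apply Finset.image_congr
        intro v hv
        have hvne := (Finset.mem_erase.1 hv).1
        have hv' := hshape (Finset.mem_of_mem_erase hv)
        rw [Finset.mem_insert, Finset.mem_Icc] at hv'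
        simp only [Function.comp_apply, id_eq]
        rcases hv' with rfl | hv'
        · rw [rl1, if_pos rfl, rl1i, if_pos rfl]
        · have hvx : v ≠ x := by rcases hx with h | h <;> omega
          rw [rl1, if_neg hvx, rl1i, if_neg (by omega)]
          omega
      rw [hcongr, Finset.image_id, Finset.insert_erase (hcS i (by omega) (by omega))]
    · by_cases h3 : c ≤ i ∧ i ≤ n
      · unfold bB
        rw [if_neg h1, if_neg h2, if_pos h3]
        unfold gB
        rw [if_pos (by omega : 1 ≤ i - c + 1 ∧ i - c + 1 ≤ n - c + 1),
          show c + (i - c + 1) - 1 = i by omega, Finset.image_image]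
        have hamb := (hS.2.1 i (by omega) (by omega)).1
        have hcongr : (S i \ Finset.Icc 2 c).image (rl2i c ∘ rl2 c)
            = (S i \ Finset.Icc 2 c).image id := by
          apply Finset.image_congr
          intro v hv
          rw [Finset.coe_sdiff, Set.mem_diff, Finset.mem_coe, Finset.mem_coe,
            Finset.mem_Icc] at hv
          have hv' := Finset.mem_Icc.1 (hamb hv.1)
          simp only [Function.comp_apply, id_eq]
          by_cases hv1 : v = 1
          · rw [hv1, rl2, if_pos rfl, rl2i, if_pos rfl]
          · rw [rl2, if_neg hv1, rl2i, if_neg (by omega)]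
            omega
        rw [hcongr, Finset.image_id]
        have hsubIcc : Finset.Icc 2 c ⊆ S i :=
          (Icc_subset_Sc hc hcn hS hS1).trans (smooth_chain hS (by omega) (by omega) (by omega))
        exact Finset.union_sdiff_of_subset hsubIcc
      · unfold bB
        rw [if_neg h1, if_neg h2, if_neg h3, hS.1 i (by omega)]

lemma xof_bB (hc : 2 ≤ c) (hcn : c ≤ n) (hT : IsSmooth (c-2) T) (hU : IsSmooth (n-c+1) U) :
    xof c (bB n c (xofU c U) T U) = xofU c U := by
  obtain ⟨hU1, hx⟩ := xofU_spec hc hcn hU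
  set x := xofU c U with hxdef
  have hbc : bB n c x T U c = Finset.Icc 2 c ∪ (U (c-c+1)).image (rl2i c) := by
    unfold bB
    rw [if_neg (by omega), if_neg (by omega), if_pos ⟨le_rfl, hcn⟩]
  have himg : (U (c-c+1)).image (rl2i c) = {x} := by
    rw [show c - c + 1 = 1 by omega, hU1, Finset.image_singleton]
    congr 1
    rcases hx with h1 | h1
    · rw [h1, rl2, if_pos rfl, rl2i, if_pos rfl]
    · rw [rl2, if_neg (by omega), rl2i, if_neg (by omega)]
      omega
  have hD : bB n c x T U c \ Finset.Icc 2 c = {x} := by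
    rw [hbc, himg]
    ext v
    rw [Finset.mem_sdiff, Finset.mem_union, Finset.mem_singleton]
    constructor
    · rintro ⟨h | h, hI⟩
      · exact absurd h hI
      · exact h
    · rintro rfl
      refine ⟨Or.inr rfl, ?_⟩
      rw [Finset.mem_Icc]
      rcases hx with h1 | h1 <;> omega
  rw [xof, hD, Finset.sum_singleton]

lemma fB_of_bB (hc : 2 ≤ c) (hcn : c ≤ n) (hT : IsSmooth (c-2) T) (hU : IsSmooth (n-c+1) U) :
    fB c (xofU c U) (bB n c (xofU c U) T U) = T := by
  obtain ⟨hU1, hx⟩ := xofU_spec hc hcn hU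
  set x := xofU c U with hxdef
  have hTamb : ∀ j, 1 ≤ j → j ≤ c - 2 → T j ⊆ Finset.Icc 1 (c-1) := by
    intro j ha hb
    have := (hT.2.1 j ha hb).1
    rwa [show c - 2 + 1 = c - 1 by omega] at this
  funext j
  by_cases hj : 1 ≤ j ∧ j ≤ c - 2
  · unfold fB
    rw [if_pos hj]
    unfold bB
    rw [if_neg (by omega), if_pos (by omega : 2 ≤ j + 1 ∧ j + 1 ≤ c - 1),
      show j + 1 - 1 = j by omega]
    have hcimg : c ∉ (T j).image (rl1i c x) := by
      intro hmem
      obtain ⟨u, hu, hu'⟩ := Finset.mem_image.1 hmem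
      have := Finset.mem_Icc.1 (hTamb j hj.1 hj.2 hu)
      rw [rl1i] at hu'
      by_cases h3 : u = c - 1
      · rw [if_pos h3] at hu'; rcases hx with h | h <;> omega
      · rw [if_neg h3] at hu'; omega
    rw [Finset.erase_insert hcimg, Finset.image_image]
    have hcongr : (T j).image (rl1 c x ∘ rl1i c x) = (T j).image id := by
      apply Finset.image_congr
      intro u hu
      have := Finset.mem_Icc.1 (hTamb j hj.1 hj.2 hu)
      simp only [Function.comp_apply, id_eq]
      by_cases h3 : u = c - 1
      · rw [h3, rl1i, if_pos rfl, rl1, if_pos rfl]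
      · rw [rl1i, if_neg h3, rl1, if_neg (by rcases hx with h | h <;> omega)]
        omega
    rw [hcongr, Finset.image_id]
  · unfold fB
    rw [if_neg hj, hT.1 j (by omega)]

lemma gB_of_bB (hc : 2 ≤ c) (hcn : c ≤ n) (hT : IsSmooth (c-2) T) (hU : IsSmooth (n-c+1) U) :
    gB n c (bB n c (xofU c U) T U) = U := by
  obtain ⟨hU1, hx⟩ := xofU_spec hc hcn hU
  set x := xofU c U with hxdef
  have hUamb : ∀ j, 1 ≤ j → j ≤ n - c + 1 → U j ⊆ Finset.Icc 1 (n-c+2) := by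
    intro j ha hb
    have := (hU.2.1 j ha hb).1
    rwa [show n - c + 1 + 1 = n - c + 2 by omega] at this
  funext j
  by_cases hj : 1 ≤ j ∧ j ≤ n - c + 1
  · unfold gB
    rw [if_pos hj]
    unfold bB
    rw [if_neg (by omega), if_neg (by omega),
      if_pos (by omega : c ≤ c + j - 1 ∧ c + j - 1 ≤ n),
      show c + j - 1 - c + 1 = j by omega]
    have hdisj : Disjoint (Finset.Icc 2 c) ((U j).image (rl2i c)) := by
      rw [Finset.disjoint_left]
      intro v hv hmem
      rw [Finset.mem_Icc] at hv
      obtain ⟨u, hu, hu'⟩ := Finset.mem_image.1 hmem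
      have := Finset.mem_Icc.1 (hUamb j hj.1 hj.2 hu)
      rw [rl2i] at hu'
      by_cases h3 : u = 1
      · rw [if_pos h3] at hu'; omega
      · rw [if_neg h3] at hu'; omega
    rw [Finset.union_sdiff_cancel_left hdisj, Finset.image_image]
    have hcongr : (U j).image (rl2 c ∘ rl2i c) = (U j).image id := by
      apply Finset.image_congr
      intro u hu
      have := Finset.mem_Icc.1 (hUamb j hj.1 hj.2 hu)
      simp only [Function.comp_apply, id_eq]
      by_cases h3 : u = 1
      · rw [h3, rl2i, if_pos rfl, rl2, if_pos rfl]
      · rw [rl2i, if_neg h3, rl2, if_neg (by omega)]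
        omega
    rw [hcongr, Finset.image_id]
  · unfold gB
    rw [if_neg hj, hU.1 j (by omega)]

def equivB (hc : 2 ≤ c) (hcn : c ≤ n) :
    {S : ℕ → Finset ℕ | IsSmooth n S ∧ S 1 = {c}}
      ≃ {T : ℕ → Finset ℕ | IsSmooth (c-2) T} × {U : ℕ → Finset ℕ | IsSmooth (n-c+1) U} where
  toFun S := (⟨fB c (xof c S.1) S.1,
      fB_smooth hc hcn S.2.1 (x_spec hc hcn S.2.1 S.2.2).2.1 (x_spec hc hcn S.2.1 S.2.2).1
        S.2.2⟩,
    ⟨gB n c S.1, gB_smooth hc hcn S.2.1 S.2.2⟩)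
  invFun TU := ⟨bB n c (xofU c TU.2.1) TU.1.1 TU.2.1,
    (bB_smooth hc hcn TU.1.2 TU.2.2).1, (bB_smooth hc hcn TU.1.2 TU.2.2).2⟩
  left_inv S := by
    apply Subtype.ext
    show bB n c (xofU c (gB n c S.1)) (fB c (xof c S.1) S.1) (gB n c S.1) = S.1
    rw [xofU_gB hc hcn S.2.1 S.2.2]
    exact bB_round hc hcn S.2.1 S.2.2
  right_inv TU := by
    obtain ⟨⟨T, hT⟩, ⟨U, hU⟩⟩ := TU
    refine Prod.ext (Subtype.ext ?_) (Subtype.ext ?_)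
    · show fB c (xof c (bB n c (xofU c U) T U)) (bB n c (xofU c U) T U) = T
      rw [xof_bB hc hcn hT hU]
      exact fB_of_bB hc hcn hT hU
    · exact gB_of_bB hc hcn hT hU

end CaseB

lemma cardB (n k : ℕ) (hk : k + 2 ≤ n) :
    {S : ℕ → Finset ℕ | IsSmooth n S ∧ S 1 = {k+2}}.ncard
      = {T : ℕ → Finset ℕ | IsSmooth k T}.ncard
        * {U : ℕ → Finset ℕ | IsSmooth (n-1-k) U}.ncard := by
  have h1 : k = k + 2 - 2 := by omega
  have h2 : n - 1 - k = n - (k+2) + 1 := by omega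
  rw [h2]
  nth_rewrite 1 [h1]
  exact ncard_eq_mul (equivB (by omega) hk)

lemma partition (n : ℕ) (hn : 1 ≤ n) :
    {S : ℕ → Finset ℕ | IsSmooth n S}.ncard
      = ∑ c ∈ Finset.Icc 1 (n+1), {S : ℕ → Finset ℕ | IsSmooth n S ∧ S 1 = {c}}.ncard := by
  classical
  have hfin := smooth_finite n
  have hsub : ∀ c, {S : ℕ → Finset ℕ | IsSmooth n S ∧ S 1 = {c}}.Finite :=
    fun c => hfin.subset (fun S hS => hS.1)
  rw [Set.ncard_eq_toFinset_card _ hfin]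
  have hdecomp : hfin.toFinset
      = (Finset.Icc 1 (n+1)).biUnion (fun c => (hsub c).toFinset) := by
    ext S
    simp only [Set.Finite.mem_toFinset, Set.mem_setOf_eq, Finset.mem_biUnion]
    constructor
    · intro hS
      have hcard1 : (S 1).card = 1 := (hS.2.1 1 le_rfl hn).2
      obtain ⟨c, hc⟩ := Finset.card_eq_one.1 hcard1
      refine ⟨c, ?_, hS, hc⟩
      have : c ∈ Finset.Icc 1 (n+1) := (hS.2.1 1 le_rfl hn).1 (hc ▸ Finset.mem_singleton_self c)
      exact this
    · rintro ⟨c, -, hS, -⟩; exact hS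
  have hdisj : ∀ c ∈ Finset.Icc 1 (n+1), ∀ c' ∈ Finset.Icc 1 (n+1), c ≠ c' →
      Disjoint (hsub c).toFinset (hsub c').toFinset := by
    intro c _ c' _ hcc'
    rw [Finset.disjoint_left]
    intro S hS hS'
    rw [Set.Finite.mem_toFinset] at hS hS'
    apply hcc'
    have := hS.2.symm.trans hS'.2
    simpa using this
  rw [hdecomp, Finset.card_biUnion hdisj]
  refine Finset.sum_congr rfl fun c _ => ?_
  rw [Set.ncard_eq_toFinset_card _ (hsub c)]



end SmoothAux


/-- The number `r̄ n` of smooth collections of length `n` satisfies `r̄ 0 = 1` and the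
large Schröder recursion `r̄ n = r̄ (n-1) + ∑_{k=0}^{n-1} r̄ k * r̄ (n-1-k)`. -/
theorem stmt_4 (rbar : ℕ → ℕ) (hrbar : ∀ n, rbar n = Set.ncard {S : ℕ → Finset ℕ | IsSmooth n S}) :
    rbar 0 = 1 ∧ ∀ n, 1 ≤ n →
      rbar n = rbar (n - 1) + ∑ k ∈ Finset.range n, rbar k * rbar (n - 1 - k) := by
  have h0 : rbar 0 = 1 := by
    rw [hrbar 0]
    have hset : {S : ℕ → Finset ℕ | IsSmooth 0 S} = {fun _ => ∅} := by
      ext S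
      simp only [Set.mem_setOf_eq, Set.mem_singleton_iff, SmoothAux.smooth_zero_iff]
    rw [hset, Set.ncard_singleton]
  refine ⟨h0, ?_⟩
  intro n hn
  rw [hrbar n, SmoothAux.partition n hn]
  have hsplit : Finset.Icc 1 (n+1) = insert 1 (Finset.Icc 2 (n+1)) := by
    ext c
    simp only [Finset.mem_Icc, Finset.mem_insert]
    omega
  rw [hsplit, Finset.sum_insert (by simp)]
  congr 1
  · rw [SmoothAux.cardA n hn, ← hrbar (n-1)]
  · have himg : Finset.Icc 2 (n+1) = (Finset.range n).image (fun k => k + 2) := by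
      ext c
      simp only [Finset.mem_Icc, Finset.mem_image, Finset.mem_range]
      constructor
      · intro h; exact ⟨c - 2, by omega, by omega⟩
      · rintro ⟨k, hk, rfl⟩; omega
    rw [himg, Finset.sum_image (by intro a _ b _ h; simp only at h; omega)]
    refine Finset.sum_congr rfl fun k hk => ?_
    rw [Finset.mem_range] at hk
    by_cases hk2 : k + 2 ≤ n
    · rw [SmoothAux.cardB n k hk2, ← hrbar k, ← hrbar (n-1-k)]
    · rw [show k + 2 = n + 1 by omega, SmoothAux.cardC n hn, ← hrbar (n-1),
        show n - 1 - k = 0 by omega, h0, mul_one, show k = n - 1 by omega]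
end

section
/- The number of smooth collections of length n equals the n-th large Schröder number r_n, defined by r_0 = 1 and r_n = r_{n-1} + Σ_{k=0}^{n-1} r_k r_{n-1-k}. In particular the number of smooth collections of lengths 1, 2, 3, 4 is 2, 6, 22, 90 respectively. -/
namespace SmoothAux

def Cond (n : ℕ) (f : ℕ → ℕ) : Prop :=
  ∀ a b, 1 ≤ a → a < b → b ≤ n → f b ≤ a → f (a + 1) ≤ b

def PP (n : ℕ) (f : ℕ → ℕ) : Prop :=
  Set.BijOn f (Set.Icc 1 (n + 1)) (Set.Icc 1 (n + 1)) ∧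
  (∀ v, v ∉ Set.Icc 1 (n + 1) → f v = v) ∧ Cond n f

lemma PP.mem {n : ℕ} {f : ℕ → ℕ} (hf : PP n f) {v : ℕ} (h1 : 1 ≤ v) (h2 : v ≤ n + 1) :
    1 ≤ f v ∧ f v ≤ n + 1 := by
  have := hf.1.mapsTo (Set.mem_Icc.2 ⟨h1, h2⟩); exact Set.mem_Icc.1 this

lemma PP.inj {n : ℕ} {f : ℕ → ℕ} (hf : PP n f) {v w : ℕ}
    (hv1 : 1 ≤ v) (hv2 : v ≤ n + 1) (hw1 : 1 ≤ w) (hw2 : w ≤ n + 1)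
    (h : f v = f w) : v = w :=
  hf.1.injOn (Set.mem_Icc.2 ⟨hv1, hv2⟩) (Set.mem_Icc.2 ⟨hw1, hw2⟩) h

lemma PP.surj {n : ℕ} {f : ℕ → ℕ} (hf : PP n f) {w : ℕ} (hw1 : 1 ≤ w) (hw2 : w ≤ n + 1) :
    ∃ v, 1 ≤ v ∧ v ≤ n + 1 ∧ f v = w := by
  obtain ⟨v, hv, hfv⟩ := hf.1.surjOn (Set.mem_Icc.2 ⟨hw1, hw2⟩)
  exact ⟨v, (Set.mem_Icc.1 hv).1, (Set.mem_Icc.1 hv).2, hfv⟩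

lemma PP.id_out {n : ℕ} {f : ℕ → ℕ} (hf : PP n f) {v : ℕ} (h : v = 0 ∨ n + 1 < v) :
    f v = v := by
  apply hf.2.1; simp [Set.mem_Icc]; omega

/-- build a PP from mapsTo+injOn -/
lemma PP.of_parts {n : ℕ} {f : ℕ → ℕ}
    (hm : ∀ v, 1 ≤ v → v ≤ n + 1 → 1 ≤ f v ∧ f v ≤ n + 1)
    (hi : ∀ v w, 1 ≤ v → v ≤ n + 1 → 1 ≤ w → w ≤ n + 1 → f v = f w → v = w)
    (ho : ∀ v, v = 0 ∨ n + 1 < v → f v = v)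
    (hc : Cond n f) : PP n f := by
  have hmt : Set.MapsTo f (Set.Icc 1 (n+1)) (Set.Icc 1 (n+1)) := by
    intro v hv
    rw [Set.mem_Icc] at hv ⊢
    exact hm v hv.1 hv.2
  have hinj : Set.InjOn f (Set.Icc 1 (n+1)) := by
    intro v hv w hw hfe
    rw [Set.mem_Icc] at hv hw
    exact hi v w hv.1 hv.2 hw.1 hw.2 hfe
  refine ⟨((Set.finite_Icc 1 (n+1)).injOn_iff_bijOn_of_mapsTo hmt).1 hinj, ?_, hc⟩
  intro v hv
  apply ho; rw [Set.mem_Icc] at hv; omega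

instance ppFinite (n : ℕ) : Finite {f : ℕ → ℕ // PP n f} := by
  have : Finite ↥(Set.Icc (1:ℕ) (n+1)) := (Set.finite_Icc _ _).to_subtype
  apply Finite.of_injective (fun F : {f : ℕ → ℕ // PP n f} =>
    (fun v : Set.Icc (1:ℕ) (n+1) => (⟨F.1 v, F.2.1.mapsTo v.2⟩ : Set.Icc (1:ℕ) (n+1))))
  intro F G hFG
  apply Subtype.ext
  funext v
  by_cases hv : v ∈ Set.Icc (1:ℕ) (n+1)
  · have := congrFun hFG ⟨v, hv⟩
    simpa using congrArg Subtype.val this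
  · rw [F.2.2.1 v hv, G.2.2.1 v hv]

noncomputable def NN (n : ℕ) : ℕ := Nat.card {f : ℕ → ℕ // PP n f}

theorem NN_zero : NN 0 = 1 := by
  have hpp : ∀ f : ℕ → ℕ, PP 0 f ↔ f = id := by
    intro f
    constructor
    · intro hf
      funext v
      by_cases hv : v ∈ Set.Icc (1:ℕ) 1
      · rw [Set.mem_Icc] at hv
        have hv1 : v = 1 := by omega
        have := hf.mem (v := 1) le_rfl le_rfl
        simp [hv1]; omega
      · simpa using hf.2.1 v hv
    · rintro rfl
      refine ⟨Set.bijOn_id _, fun v _ => rfl, fun a b h1 h2 h3 _ => by omega⟩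
  rw [NN, Nat.card_eq_one_iff_unique]
  constructor
  · constructor
    intro F G
    apply Subtype.ext
    rw [(hpp F.1).1 F.2, (hpp G.1).1 G.2]
  · exact ⟨⟨id, (hpp id).2 rfl⟩⟩

theorem extend_PP {n : ℕ} {f : ℕ → ℕ} :
    (PP n f ∧ f (n + 2) = n + 2) ↔ (PP (n + 1) f ∧ f (n + 2) = n + 2) := by
  constructor
  · rintro ⟨hf, hfix⟩
    refine ⟨PP.of_parts ?_ ?_ ?_ ?_, hfix⟩
    · intro v h1 h2
      rcases Nat.lt_or_ge v (n+2) with hv | hv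
      · have := hf.mem h1 (by omega); omega
      · have : v = n + 2 := by omega
        rw [this, hfix]; omega
    · intro v w hv1 hv2 hw1 hw2 hfe
      rcases Nat.lt_or_ge v (n+2) with hv | hv <;> rcases Nat.lt_or_ge w (n+2) with hw | hw
      · exact hf.inj hv1 (by omega) hw1 (by omega) hfe
      · have hw' : w = n + 2 := by omega
        rw [hw', hfix] at hfe
        have := hf.mem hv1 (by omega); omega
      · have hv' : v = n + 2 := by omega
        rw [hv', hfix] at hfe
        have := hf.mem hw1 (by omega); omega
      · omega
    · intro v hv
      apply hf.id_out
      rcases hv with h | h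
      · left; exact h
      · right; omega
    · intro a b h1 h2 h3 h4
      rcases Nat.lt_or_ge b (n+1) with hb | hb
      · exact hf.2.2 a b h1 h2 (by omega) h4
      · have : b = n + 1 := by omega
        subst this
        have := hf.mem (v := a + 1) (by omega) (by omega)
        omega
  · rintro ⟨hf, hfix⟩
    refine ⟨PP.of_parts ?_ ?_ ?_ ?_, hfix⟩
    · intro v h1 h2
      have hm := hf.mem h1 (by omega)
      rcases Nat.lt_or_ge (f v) (n+2) with hfv | hfv
      · omega
      · have hfv' : f v = n + 2 := by omega
        have := hf.inj h1 (by omega) (by omega) (by omega) (hfv'.trans hfix.symm)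
        omega
    · intro v w hv1 hv2 hw1 hw2 hfe
      exact hf.inj hv1 (by omega) hw1 (by omega) hfe
    · intro v hv
      rcases hv with h | h
      · exact hf.id_out (Or.inl h)
      · rcases Nat.lt_or_ge (n+2) v with h' | h'
        · exact hf.id_out (Or.inr (by omega))
        · have : v = n + 2 := by omega
          rw [this, hfix]
    · exact fun a b h1 h2 h3 h4 => hf.2.2 a b h1 h2 (by omega) h4

def psi (n k : ℕ) (g h : ℕ → ℕ) : ℕ → ℕ := fun v =>
  if v = k + 1 then n + 2
  else if v < k + 1 then (if g v < k + 1 then g v else h 1 + k)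
  else if v ≤ n + 1 then h (v - k) + k
  else if v = n + 2 then (if g (k + 1) < k + 1 then g (k + 1) else h 1 + k)
  else v

section psiLemmas

variable {n k : ℕ} {g h : ℕ → ℕ}

lemma psi_m : psi n k g h (k + 1) = n + 2 := by simp [psi]

lemma psi_small {v : ℕ} (hv : v < k + 1) :
    psi n k g h v = if g v < k + 1 then g v else h 1 + k := by
  simp [psi, hv, Nat.ne_of_lt hv]

lemma psi_big {v : ℕ} (h1 : k + 1 < v) (h2 : v ≤ n + 1) :
    psi n k g h v = h (v - k) + k := by
  simp [psi, Nat.ne_of_gt h1, h2, not_lt_of_gt h1]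

lemma psi_top (hk : k ≤ n) :
    psi n k g h (n + 2) = if g (k + 1) < k + 1 then g (k + 1) else h 1 + k := by
  have h1 : n + 2 ≠ k + 1 := by omega
  have h2 : ¬ (n + 2 < k + 1) := by omega
  have h3 : ¬ (n + 2 ≤ n + 1) := by omega
  simp [psi, h1, h2, h3]

lemma psi_mem (hk : k ≤ n) (hg : PP k g) (hh : PP (n - k) h) {v : ℕ}
    (h1 : 1 ≤ v) (h2 : v ≤ n + 2) :
    1 ≤ psi n k g h v ∧ psi n k g h v ≤ n + 2 := by
  by_cases hm : v = k + 1
  · rw [hm, psi_m]; omega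
  rcases Nat.lt_or_ge v (k + 1) with hv | hv
  · rw [psi_small hv]
    have hgm := hg.mem h1 (by omega)
    have hhm := hh.mem (v := 1) le_rfl (by omega)
    split <;> omega
  · have hv' : k + 1 < v := by omega
    rcases le_or_gt v (n + 1) with hvn | hvn
    · rw [psi_big hv' hvn]
      have hhm := hh.mem (v := v - k) (by omega) (by omega)
      omega
    · have hv2 : v = n + 2 := by omega
      rw [hv2, psi_top hk]
      have hgm := hg.mem (v := k + 1) (by omega) le_rfl
      have hhm := hh.mem (v := 1) le_rfl (by omega)
      split <;> omega

/-- values other than `k+1` do not map to `n+2` -/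
lemma psi_lt (hk : k ≤ n) (hg : PP k g) (hh : PP (n - k) h) {v : ℕ}
    (h1 : 1 ≤ v) (h2 : v ≤ n + 2) (h3 : v ≠ k + 1) :
    psi n k g h v ≤ n + 1 := by
  rcases Nat.lt_or_ge v (k + 1) with hv | hv
  · rw [psi_small hv]
    have hgm := hg.mem h1 (by omega)
    have hhm := hh.mem (v := 1) le_rfl (by omega)
    split <;> omega
  · have hv' : k + 1 < v := by omega
    rcases le_or_gt v (n + 1) with hvn | hvn
    · rw [psi_big hv' hvn]
      have hhm := hh.mem (v := v - k) (by omega) (by omega)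
      omega
    · have hv2 : v = n + 2 := by omega
      rw [hv2, psi_top hk]
      have hgm := hg.mem (v := k + 1) (by omega) le_rfl
      have hhm := hh.mem (v := 1) le_rfl (by omega)
      split <;> omega

theorem psi_PP (hk : k ≤ n) (hg : PP k g) (hh : PP (n - k) h) :
    PP (n + 1) (psi n k g h) := by
  apply PP.of_parts
  · exact fun v h1 h2 => psi_mem hk hg hh h1 h2
  · -- injectivity
    intro v w hv1 hv2 hw1 hw2 hfe
    -- helper facts
    have hh1 := hh.mem (v := 1) le_rfl (by omega)
    by_cases hvm : v = k + 1
    · by_cases hwm : w = k + 1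
      · rw [hvm, hwm]
      · exfalso
        rw [hvm, psi_m] at hfe
        have := psi_lt hk hg hh hw1 hw2 hwm
        omega
    by_cases hwm : w = k + 1
    · exfalso
      rw [hwm, psi_m] at hfe
      have := psi_lt hk hg hh hv1 hv2 hvm
      omega
    -- neither is k+1. Classify as smallish (v < k+1 ∨ v = n+2) or big
    -- smallish values: use ρ v = if v = n+2 then k+1 else v
    set ρ : ℕ → ℕ := fun v => if v = n + 2 then k + 1 else v with hρ
    have hsmall : ∀ u, 1 ≤ u → u ≤ n + 2 → u ≠ k + 1 → (u < k + 1 ∨ u = n + 2) →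
        psi n k g h u = (if g (ρ u) < k + 1 then g (ρ u) else h 1 + k) ∧
        1 ≤ ρ u ∧ ρ u ≤ k + 1 := by
      intro u hu1 hu2 hum hus
      rcases hus with hus | hus
      · have : ρ u = u := by simp [hρ]; omega
        rw [this, psi_small hus]
        exact ⟨rfl, by omega⟩
      · subst hus
        have hr : ρ (n + 2) = k + 1 := by simp [hρ]
        rw [hr, psi_top hk]
        exact ⟨rfl, by omega⟩
    have hbigcase : ∀ u, k + 1 < u → u ≤ n + 1 →
        k + 1 ≤ psi n k g h u ∧ psi n k g h u = h (u - k) + k := by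
      intro u hu1 hu2
      have := hh.mem (v := u - k) (by omega) (by omega)
      rw [psi_big hu1 hu2]
      exact ⟨by omega, rfl⟩
    have hvclass : (v < k + 1 ∨ v = n + 2) ∨ (k + 1 < v ∧ v ≤ n + 1) := by omega
    have hwclass : (w < k + 1 ∨ w = n + 2) ∨ (k + 1 < w ∧ w ≤ n + 1) := by omega
    rcases hvclass with hvc | hvc <;> rcases hwclass with hwc | hwc
    · -- both smallish
      obtain ⟨hev, hρv1, hρv2⟩ := hsmall v hv1 hv2 hvm hvc
      obtain ⟨hew, hρw1, hρw2⟩ := hsmall w hw1 hw2 hwm hwc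
      rw [hev, hew] at hfe
      have hgv := hg.mem hρv1 hρv2
      have hgw := hg.mem hρw1 hρw2
      have hρeq : ρ v = ρ w := by
        rcases lt_or_ge (g (ρ v)) (k + 1) with h1 | h1 <;>
          rcases lt_or_ge (g (ρ w)) (k + 1) with h2 | h2
        · rw [if_pos h1, if_pos h2] at hfe
          exact hg.inj hρv1 hρv2 hρw1 hρw2 hfe
        · rw [if_pos h1, if_neg (not_lt_of_ge h2)] at hfe
          omega
        · rw [if_neg (not_lt_of_ge h1), if_pos h2] at hfe
          omega
        · exact hg.inj hρv1 hρv2 hρw1 hρw2 (by omega)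
      -- ρ injective on our values
      have e1 : ρ v = if v = n + 2 then k + 1 else v := rfl
      have e2 : ρ w = if w = n + 2 then k + 1 else w := rfl
      split_ifs at e1 e2 <;> omega
    · -- v smallish, w big
      exfalso
      obtain ⟨hev, hρv1, hρv2⟩ := hsmall v hv1 hv2 hvm hvc
      obtain ⟨hwge, hwe⟩ := hbigcase w hwc.1 hwc.2
      rw [hev, hwe] at hfe
      have hgv := hg.mem hρv1 hρv2
      by_cases h1 : g (ρ v) < k + 1
      · simp [h1] at hfe; omega
      · simp [h1] at hfe
        have := hh.mem (v := w - k) (by omega) (by omega)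
        have h1' : h 1 = h (w - k) := by omega
        have := hh.inj (v := 1) (w := w - k) le_rfl (by omega) (by omega) (by omega) h1'
        omega
    · -- v big, w smallish
      exfalso
      obtain ⟨hew, hρw1, hρw2⟩ := hsmall w hw1 hw2 hwm hwc
      obtain ⟨hvge, hve⟩ := hbigcase v hvc.1 hvc.2
      rw [hew, hve] at hfe
      have hgw := hg.mem hρw1 hρw2
      by_cases h1 : g (ρ w) < k + 1
      · simp [h1] at hfe; omega
      · simp [h1] at hfe
        have := hh.mem (v := v - k) (by omega) (by omega)
        have h1' : h (v - k) = h 1 := by omega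
        have := hh.inj (v := v - k) (w := 1) (by omega) (by omega) le_rfl (by omega) h1'
        omega
    · -- both big
      obtain ⟨_, hve⟩ := hbigcase v hvc.1 hvc.2
      obtain ⟨_, hwe⟩ := hbigcase w hwc.1 hwc.2
      rw [hve, hwe] at hfe
      have : h (v - k) = h (w - k) := by omega
      have := hh.inj (v := v - k) (w := w - k) (by omega) (by omega) (by omega) (by omega) this
      omega
  · -- id outside
    intro v hv
    rcases hv with h0 | hgt
    · subst h0
      have hg0 : g 0 = 0 := hg.id_out (Or.inl rfl)
      simp [psi, hg0]
    · have h1 : v ≠ k + 1 := by omega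
      have h2 : ¬ (v < k + 1) := by omega
      have h3 : ¬ (v ≤ n + 1) := by omega
      have h4 : v ≠ n + 2 := by omega
      simp [psi, h1, h2, h3, h4]
  · -- Cond
    intro a b ha hab hb hfb
    by_cases hbm : b = k + 1
    · exfalso; rw [hbm, psi_m] at hfb; omega
    rcases Nat.lt_or_ge b (k + 1) with hbs | hbs
    · -- b small
      rw [psi_small hbs] at hfb
      have hgb : g b < k + 1 := by
        by_contra hc
        simp [hc] at hfb
        have := hh.mem (v := 1) le_rfl (by omega)
        omega
      simp [hgb] at hfb
      have hcg := hg.2.2 a b ha hab (by omega) hfb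
      have ha1 : a + 1 < k + 1 := by omega
      rw [psi_small ha1]
      have : g (a + 1) < k + 1 := by omega
      simp [this]
      omega
    · -- b big (b > k+1 since b ≠ k+1)
      have hbb : k + 1 < b := by omega
      rw [psi_big hbb (by omega)] at hfb
      have hhb := hh.mem (v := b - k) (by omega) (by omega)
      have hak : k + 1 ≤ a := by omega
      have ha1b : k + 1 < a + 1 := by omega
      rw [psi_big ha1b (by omega)]
      -- need h (a+1-k) ≤ b - k
      rcases Nat.lt_or_ge (b - k) (n - k + 1) with hbn | hbn
      · -- use Cond (n-k) h
        have hc := hh.2.2 (a - k) (b - k) (by omega) (by omega) (by omega) (by omega)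
        have : a - k + 1 = a + 1 - k := by omega
        rw [this] at hc
        omega
      · -- b = n+1 : bound directly
        have := hh.mem (v := a + 1 - k) (by omega) (by omega)
        omega
end psiLemmas

section psiInj

variable {n k : ℕ} {g h g' h' : ℕ → ℕ}

theorem psi_inj (hk : k ≤ n) (hg : PP k g) (hh : PP (n - k) h) (hg' : PP k g')
    (hh' : PP (n - k) h') (heq : psi n k g h = psi n k g' h') : g = g' ∧ h = h' := by
  have hh1m := hh.mem (v := 1) le_rfl (by omega)
  have hh1m' := hh'.mem (v := 1) le_rfl (by omega)
  have hgg' : g = g' := by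
    funext v
    rcases (by omega : (v = 0 ∨ k + 1 < v) ∨ (1 ≤ v ∧ v ≤ k) ∨ v = k + 1) with hv | hv | hv
    · rw [hg.id_out hv, hg'.id_out hv]
    · have hvs : v < k + 1 := by omega
      have hcv := congrFun heq v
      rw [psi_small hvs, psi_small hvs] at hcv
      have hb1 := hg.mem hv.1 (by omega)
      have hb2 := hg'.mem hv.1 (by omega)
      split_ifs at hcv <;> omega
    · subst hv
      have hcv := congrFun heq (n + 2)
      rw [psi_top hk, psi_top hk] at hcv
      have hb1 := hg.mem (v := k + 1) (by omega) le_rfl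
      have hb2 := hg'.mem (v := k + 1) (by omega) le_rfl
      split_ifs at hcv <;> omega
  subst hgg'
  refine ⟨rfl, ?_⟩
  funext v
  rcases (by omega : (v = 0 ∨ n - k + 1 < v) ∨ (2 ≤ v ∧ v ≤ n - k + 1) ∨ v = 1)
    with hv | hv | hv
  · rw [hh.id_out hv, hh'.id_out hv]
  · have hcv := congrFun heq (v + k)
    rw [psi_big (by omega) (by omega), psi_big (by omega) (by omega)] at hcv
    have hvk : v + k - k = v := by omega
    rw [hvk] at hcv
    omega
  · subst hv
    by_cases hcase : g (k + 1) < k + 1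
    · -- there is a small e with g e = k + 1
      obtain ⟨e, he1, he2, hge⟩ := hg.surj (w := k + 1) (by omega) le_rfl
      have hek : e ≠ k + 1 := by intro hc; rw [hc] at hge; omega
      have hcv := congrFun heq e
      rw [psi_small (by omega), psi_small (by omega)] at hcv
      rw [hge] at hcv
      simp only [lt_irrefl, if_false] at hcv
      omega
    · have hcv := congrFun heq (n + 2)
      rw [psi_top hk, psi_top hk] at hcv
      rw [if_neg hcase, if_neg hcase] at hcv
      omega

end psiInj

theorem psi_surj {n : ℕ} {f : ℕ → ℕ} (hf : PP (n + 1) f) {k : ℕ} (hk : k ≤ n)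
    (hfk : f (k + 1) = n + 2) :
    ∃ g h, PP k g ∧ PP (n - k) h ∧ f = psi n k g h := by
  classical
  -- Step 1: all of [k+1, n+1] has f-value ≥ k+1
  have step1 : ∀ v, k + 1 ≤ v → v ≤ n + 1 → k + 1 ≤ f v := by
    intro v h1 h2
    by_cases hv : v = k + 1
    · rw [hv, hfk]; omega
    by_contra hlt
    push_neg at hlt
    have hk1 : 1 ≤ k := by
      have := (hf.mem (v := v) (by omega) (by omega)).1; omega
    have := hf.2.2 k v hk1 (by omega) (by omega) (by omega)
    rw [hfk] at this; omega
  -- values other than k+1 do not hit n+2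
  have hne : ∀ v, 1 ≤ v → v ≤ n + 2 → v ≠ k + 1 → f v ≤ n + 1 := by
    intro v h1 h2 h3
    have hm := hf.mem (v := v) h1 (by omega)
    by_contra hc
    have hfv : f v = n + 2 := by omega
    exact h3 (hf.inj (by omega) (by omega) (by omega) (by omega) (hfv.trans hfk.symm))
  -- Step 2: the unique escaping element e
  obtain ⟨e, he_range, hfe_ge, hfe_le, he_uniq⟩ :
      ∃ e, (1 ≤ e ∧ e ≤ k ∨ e = n + 2) ∧ k + 1 ≤ f e ∧ f e ≤ n + 1 ∧
        ∀ v, (1 ≤ v ∧ v ≤ k ∨ v = n + 2) → k + 1 ≤ f v → v = e := by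
    set W := (Finset.Icc 1 (n + 2)).filter (fun v => k + 1 ≤ f v) with hW
    have hcardW : W.card = n - k + 2 := by
      have hb : W.card = (Finset.Icc (k + 1) (n + 2)).card := by
        apply Finset.card_bij (fun v _ => f v)
        · intro v hv
          rw [hW, Finset.mem_filter, Finset.mem_Icc] at hv
          rw [Finset.mem_Icc]
          have := hf.mem hv.1.1 (by omega)
          omega
        · intro v hv w hw hfe
          rw [hW, Finset.mem_filter, Finset.mem_Icc] at hv hw
          exact hf.inj (by omega) (by omega) (by omega) (by omega) hfe
        · intro w hw
          rw [Finset.mem_Icc] at hw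
          obtain ⟨v, hv1, hv2, hfv⟩ := hf.surj (w := w) (by omega) (by omega)
          refine ⟨v, ?_, hfv⟩
          rw [hW, Finset.mem_filter, Finset.mem_Icc]
          omega
      rw [hb, Nat.card_Icc]; omega
    have hsub : Finset.Icc (k + 1) (n + 1) ⊆ W := by
      intro v hv
      rw [Finset.mem_Icc] at hv
      rw [hW, Finset.mem_filter, Finset.mem_Icc]
      exact ⟨⟨by omega, by omega⟩, step1 v hv.1 hv.2⟩
    have hcard1 : (W \ Finset.Icc (k + 1) (n + 1)).card = 1 := by
      rw [Finset.card_sdiff_of_subset hsub, hcardW, Nat.card_Icc]; omega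
    obtain ⟨e, he⟩ := Finset.card_eq_one.1 hcard1
    have hemem : e ∈ W \ Finset.Icc (k + 1) (n + 1) := by
      rw [he]; exact Finset.mem_singleton_self e
    rw [Finset.mem_sdiff, hW, Finset.mem_filter, Finset.mem_Icc, Finset.mem_Icc] at hemem
    have hene : e ≠ k + 1 := by omega
    refine ⟨e, by omega, hemem.1.2, hne e (by omega) (by omega) hene, ?_⟩
    intro v hv hge
    have hvmem : v ∈ W \ Finset.Icc (k + 1) (n + 1) := by
      rw [Finset.mem_sdiff, hW, Finset.mem_filter, Finset.mem_Icc, Finset.mem_Icc]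
      exact ⟨⟨⟨by omega, by omega⟩, hge⟩, by omega⟩
    rw [he, Finset.mem_singleton] at hvmem
    exact hvmem
  -- define g and h
  set g : ℕ → ℕ := fun v => if 1 ≤ v ∧ v ≤ k then (if f v ≤ k then f v else k + 1)
      else if v = k + 1 then (if f (n + 2) ≤ k then f (n + 2) else k + 1) else v with hgdef
  set h : ℕ → ℕ := fun v' => if v' = 1 then f e - k
      else if 2 ≤ v' ∧ v' ≤ n - k + 1 then f (v' + k) - k else v' with hhdef
  -- branch lemmas for g
  have hgs : ∀ v, 1 ≤ v → v ≤ k → g v = if f v ≤ k then f v else k + 1 := by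
    intro v h1 h2
    rw [hgdef]
    simp only []
    rw [if_pos ⟨h1, h2⟩]
  have hgm : g (k + 1) = if f (n + 2) ≤ k then f (n + 2) else k + 1 := by
    rw [hgdef]
    simp only []
    rw [if_neg (by omega)]
    simp
  have hgo : ∀ v, ¬(1 ≤ v ∧ v ≤ k) → v ≠ k + 1 → g v = v := by
    intro v h1 h2
    rw [hgdef]
    simp only []
    rw [if_neg h1, if_neg h2]
  -- branch lemmas for h
  have hh1 : h 1 = f e - k := by simp [hhdef]
  have hhb : ∀ v', 2 ≤ v' → v' ≤ n - k + 1 → h v' = f (v' + k) - k := by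
    intro v' h1 h2
    rw [hhdef]
    simp only []
    rw [if_neg (by omega), if_pos ⟨h1, h2⟩]
  have hho : ∀ v', ¬(1 ≤ v' ∧ v' ≤ n - k + 1) → h v' = v' := by
    intro v' h1
    rw [hhdef]
    simp only []
    rw [if_neg (by omega), if_neg (by omega)]
  -- bounds for big values
  have hbig : ∀ v', 2 ≤ v' → v' ≤ n - k + 1 → k + 1 ≤ f (v' + k) ∧ f (v' + k) ≤ n + 1 := by
    intro v' h1 h2
    exact ⟨step1 (v' + k) (by omega) (by omega), hne (v' + k) (by omega) (by omega) (by omega)⟩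
  have hPg : PP k g := by
    apply PP.of_parts
    · intro v h1 h2
      rcases (by omega : v ≤ k ∨ v = k + 1) with hv | hv
      · rw [hgs v h1 hv]
        have := hf.mem (v := v) h1 (by omega)
        split_ifs <;> omega
      · rw [hv, hgm]
        have := hf.mem (v := n + 2) (by omega) (by omega)
        split_ifs <;> omega
    · intro v w hv1 hv2 hw1 hw2 hge
      rcases (by omega : v ≤ k ∨ v = k + 1) with hvk | hvk <;>
        rcases (by omega : w ≤ k ∨ w = k + 1) with hwk | hwk
      · rw [hgs v hv1 hvk, hgs w hw1 hwk] at hge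
        by_cases h1 : f v ≤ k <;> by_cases h2 : f w ≤ k
        · rw [if_pos h1, if_pos h2] at hge
          exact hf.inj (by omega) (by omega) (by omega) (by omega) hge
        · rw [if_pos h1, if_neg h2] at hge; omega
        · rw [if_neg h1, if_pos h2] at hge; omega
        · have := he_uniq v (Or.inl ⟨hv1, hvk⟩) (by omega)
          have := he_uniq w (Or.inl ⟨hw1, hwk⟩) (by omega)
          omega
      · exfalso
        rw [hgs v hv1 hvk, hwk, hgm] at hge
        by_cases h1 : f v ≤ k <;> by_cases h2 : f (n + 2) ≤ k
        · rw [if_pos h1, if_pos h2] at hge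
          have := hf.inj (v := v) (w := n + 2) (by omega) (by omega) (by omega) (by omega) hge
          omega
        · rw [if_pos h1, if_neg h2] at hge; omega
        · rw [if_neg h1, if_pos h2] at hge; omega
        · have := he_uniq v (Or.inl ⟨hv1, hvk⟩) (by omega)
          have := he_uniq (n + 2) (Or.inr rfl) (by omega)
          omega
      · exfalso
        rw [hgs w hw1 hwk, hvk, hgm] at hge
        by_cases h1 : f w ≤ k <;> by_cases h2 : f (n + 2) ≤ k
        · rw [if_pos h1, if_pos h2] at hge
          have := hf.inj (v := w) (w := n + 2) (by omega) (by omega) (by omega) (by omega) hge.symm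
          omega
        · rw [if_pos h1, if_neg h2] at hge; omega
        · rw [if_neg h1, if_pos h2] at hge; omega
        · have := he_uniq w (Or.inl ⟨hw1, hwk⟩) (by omega)
          have := he_uniq (n + 2) (Or.inr rfl) (by omega)
          omega
      · omega
    · intro v hv
      exact hgo v (by omega) (by omega)
    · intro a b ha hab hb hfb
      rw [hgs b (by omega) hb] at hfb
      have hfbk : f b ≤ k := by by_contra hc; rw [if_neg hc] at hfb; omega
      rw [if_pos hfbk] at hfb
      have hfa := hf.2.2 a b ha hab (by omega) hfb
      rw [hgs (a + 1) (by omega) (by omega), if_pos (by omega)]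
      exact hfa
  have hPh : PP (n - k) h := by
    apply PP.of_parts
    · intro v h1 h2
      rcases (by omega : v = 1 ∨ 2 ≤ v) with hv | hv
      · rw [hv, hh1]; omega
      · rw [hhb v hv h2]
        have := hbig v hv h2
        omega
    · intro v w hv1 hv2 hw1 hw2 hge
      rcases (by omega : v = 1 ∨ 2 ≤ v) with hv | hv <;>
        rcases (by omega : w = 1 ∨ 2 ≤ w) with hw | hw
      · omega
      · exfalso
        rw [hv, hh1, hhb w hw hw2] at hge
        have hb := hbig w hw hw2
        have : f e = f (w + k) := by omega
        have := hf.inj (v := e) (w := w + k) (by omega) (by omega) (by omega) (by omega) this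
        omega
      · exfalso
        rw [hw, hh1, hhb v hv hv2] at hge
        have hb := hbig v hv hv2
        have : f e = f (v + k) := by omega
        have := hf.inj (v := e) (w := v + k) (by omega) (by omega) (by omega) (by omega) this
        omega
      · rw [hhb v hv hv2, hhb w hw hw2] at hge
        have hb1 := hbig v hv hv2
        have hb2 := hbig w hw hw2
        have : f (v + k) = f (w + k) := by omega
        have := hf.inj (v := v + k) (w := w + k) (by omega) (by omega) (by omega) (by omega) this
        omega
    · intro v hv
      exact hho v (by omega)
    · intro a b ha hab hb hfb
      rw [hhb b (by omega) (by omega)] at hfb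
      have hbb := hbig b (by omega) (by omega)
      have hfab : f (b + k) ≤ a + k := by omega
      have hc := hf.2.2 (a + k) (b + k) (by omega) (by omega) (by omega) hfab
      rw [show a + k + 1 = (a + 1) + k by omega] at hc
      rw [hhb (a + 1) (by omega) (by omega)]
      have hba := hbig (a + 1) (by omega) (by omega)
      omega
  refine ⟨g, h, hPg, hPh, ?_⟩
  funext v
  rcases (by omega : v = 0 ∨ (1 ≤ v ∧ v ≤ k) ∨ v = k + 1 ∨ (k + 1 < v ∧ v ≤ n + 1) ∨
      v = n + 2 ∨ n + 2 < v) with hv | hv | hv | hv | hv | hv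
  · subst hv
    rw [hf.id_out (Or.inl rfl), psi_small (by omega : 0 < k + 1), hgo 0 (by omega) (by omega)]
    rw [if_pos (by omega)]
  · rw [psi_small (by omega : v < k + 1), hgs v hv.1 hv.2]
    by_cases hfv : f v ≤ k
    · rw [if_pos hfv, if_pos (by omega)]
    · rw [if_neg hfv, if_neg (by omega), hh1]
      have := he_uniq v (Or.inl hv) (by omega)
      subst this
      omega
  · rw [hv, psi_m, hfk]
  · rw [psi_big hv.1 hv.2, hhb (v - k) (by omega) (by omega)]
    rw [show v - k + k = v by omega]
    have h1 := step1 v (by omega) (by omega)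
    omega
  · subst hv
    rw [psi_top hk, hgm]
    by_cases hfn : f (n + 2) ≤ k
    · rw [if_pos hfn, if_pos (by omega)]
    · rw [if_neg hfn, if_neg (by omega), hh1]
      have := he_uniq (n + 2) (Or.inr rfl) (by omega)
      rw [← this]
      have : k + 1 ≤ f (n + 2) := by omega
      omega
  · rw [hf.id_out (Or.inr (by omega))]
    have h1 : v ≠ k + 1 := by omega
    have h2 : ¬ v < k + 1 := by omega
    have h3 : ¬ v ≤ n + 1 := by omega
    have h4 : v ≠ n + 2 := by omega
    simp [psi, h1, h2, h3, h4]

lemma card_sigma' {ι : Type} [Fintype ι] (γ : ι → Type) [∀ i, Finite (γ i)] :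
    Nat.card (Σ i, γ i) = ∑ i, Nat.card (γ i) := by
  classical
  letI : ∀ i, Fintype (γ i) := fun i => Fintype.ofFinite _
  simp [Nat.card_eq_fintype_card, Fintype.card_sigma]

theorem NN_rec (n : ℕ) :
    NN (n + 1) = NN n + ∑ k ∈ Finset.range (n + 1), NN k * NN (n - k) := by
  classical
  set A := {f : ℕ → ℕ // PP n f} with hA
  set B := (Σ k : Fin (n + 1), {g : ℕ → ℕ // PP k g} × {h : ℕ → ℕ // PP (n - k) h}) with hB
  have hout : ∀ f : ℕ → ℕ, PP n f → f (n + 2) = n + 2 := by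
    intro f hf
    apply hf.2.1
    simp [Set.mem_Icc]
  let F : A → {f : ℕ → ℕ // PP (n + 1) f} := fun x =>
    ⟨x.1, (extend_PP.1 ⟨x.2, hout x.1 x.2⟩).1⟩
  let G : B → {f : ℕ → ℕ // PP (n + 1) f} := fun x =>
    ⟨psi n x.1 x.2.1.1 x.2.2.1, psi_PP (Nat.lt_succ_iff.mp x.1.isLt) x.2.1.2 x.2.2.2⟩
  have hbij : Function.Bijective (Sum.elim F G) := by
    constructor
    · rintro (⟨f, hf⟩ | ⟨k, ⟨g, hg⟩, ⟨h, hh⟩⟩) (⟨f', hf'⟩ | ⟨k', ⟨g', hg'⟩, ⟨h', hh'⟩⟩) hxy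
      · simp only [Sum.elim_inl, F, Subtype.mk.injEq] at hxy
        simp [hxy]
      · exfalso
        simp only [Sum.elim_inl, Sum.elim_inr, F, G, Subtype.mk.injEq] at hxy
        have h1 : f (n + 2) = n + 2 := hout f hf
        have h2 : psi n k' g' h' (n + 2) ≤ n + 1 := by
          apply psi_lt (Nat.lt_succ_iff.mp k'.isLt) hg' hh' (by omega) (le_refl _)
          have := k'.isLt; omega
        rw [hxy] at h1
        omega
      · exfalso
        simp only [Sum.elim_inl, Sum.elim_inr, F, G, Subtype.mk.injEq] at hxy
        have h1 : f' (n + 2) = n + 2 := hout f' hf'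
        have h2 : psi n k g h (n + 2) ≤ n + 1 := by
          apply psi_lt (Nat.lt_succ_iff.mp k.isLt) hg hh (by omega) (le_refl _)
          have := k.isLt; omega
        rw [← hxy] at h1
        omega
      · simp only [Sum.elim_inr, G, Subtype.mk.injEq] at hxy
        have hkk : k = k' := by
          by_contra hkk
          have hne : (k : ℕ) + 1 ≠ (k' : ℕ) + 1 := by
            intro hc
            exact hkk (Fin.ext (by omega))
          have h1 : psi n k g h ((k : ℕ) + 1) = n + 2 := psi_m
          have h2 : psi n k' g' h' ((k : ℕ) + 1) ≤ n + 1 := by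
            apply psi_lt (Nat.lt_succ_iff.mp k'.isLt) hg' hh' (by omega) ?_ hne
            have := k.isLt; omega
          rw [hxy] at h1
          omega
        subst hkk
        obtain ⟨hge, hhe⟩ := psi_inj (Nat.lt_succ_iff.mp k.isLt) hg hh hg' hh' hxy
        subst hge
        subst hhe
        rfl
    · rintro ⟨f, hf⟩
      obtain ⟨m, hm1, hm2, hfm⟩ := hf.surj (w := n + 2) (by omega) (le_refl _)
      by_cases hm : m = n + 2
      · subst hm
        refine ⟨Sum.inl ⟨f, (extend_PP.2 ⟨hf, hfm⟩).1⟩, ?_⟩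
        simp only [Sum.elim_inl, F]
      · have hk : m - 1 ≤ n := by omega
        have hfk : f ((m - 1) + 1) = n + 2 := by
          rw [show (m - 1) + 1 = m by omega]; exact hfm
        obtain ⟨g, h, hg, hh, hfe⟩ := psi_surj hf hk hfk
        refine ⟨Sum.inr ⟨⟨m - 1, by omega⟩, ⟨g, hg⟩, ⟨h, hh⟩⟩, ?_⟩
        simp only [Sum.elim_inr, G]
        exact Subtype.ext hfe.symm
  have hcard : NN (n + 1) = Nat.card (A ⊕ B) :=
    (Nat.card_congr (Equiv.ofBijective _ hbij)).symm
  rw [hcard, Nat.card_sum]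
  congr 1
  rw [hB, card_sigma']
  rw [← Fin.sum_univ_eq_sum_range (fun k => NN k * NN (n - k))]
  apply Finset.sum_congr rfl
  intro k _
  rw [Nat.card_prod]
  rfl

section smoothEquiv

variable {n : ℕ}

lemma smooth_chain_s5 {S : ℕ → Finset ℕ} (hS : IsSmooth n S) :
    ∀ i j, 1 ≤ i → i ≤ j → j ≤ n → S i ⊆ S j := by
  intro i j hi hij hj
  induction j, hij using Nat.le_induction with
  | base => exact subset_rfl
  | succ m hm ih =>
    exact (ih (by omega)).trans (hS.2.2.1 m (by omega) (by omega))

/-- the insertion-time function of a smooth collection -/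
def tmap (n : ℕ) (S : ℕ → Finset ℕ) : ℕ → ℕ := fun v =>
  if 1 ≤ v ∧ v ≤ n + 1 then n + 1 - ((Finset.Icc 1 n).filter (fun i => v ∈ S i)).card else v

lemma tmap_card_le {S : ℕ → Finset ℕ} (v : ℕ) :
    ((Finset.Icc 1 n).filter (fun i => v ∈ S i)).card ≤ n := by
  calc ((Finset.Icc 1 n).filter (fun i => v ∈ S i)).card
      ≤ (Finset.Icc 1 n).card := Finset.card_filter_le _ _
    _ = n := by rw [Nat.card_Icc]; omega

lemma tmap_in {S : ℕ → Finset ℕ} {v : ℕ} (h1 : 1 ≤ v) (h2 : v ≤ n + 1) :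
    tmap n S v = n + 1 - ((Finset.Icc 1 n).filter (fun i => v ∈ S i)).card := by
  rw [tmap, if_pos ⟨h1, h2⟩]

lemma tmap_mem_iff {S : ℕ → Finset ℕ} (hS : IsSmooth n S) {v i : ℕ}
    (hv1 : 1 ≤ v) (hv2 : v ≤ n + 1) (hi1 : 1 ≤ i) (hi2 : i ≤ n) :
    v ∈ S i ↔ tmap n S v ≤ i := by
  have hcle := tmap_card_le (n := n) (S := S) v
  rw [tmap_in hv1 hv2]
  constructor
  · intro hmem
    have hsub : Finset.Icc i n ⊆ (Finset.Icc 1 n).filter (fun j => v ∈ S j) := by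
      intro j hj
      rw [Finset.mem_Icc] at hj
      rw [Finset.mem_filter, Finset.mem_Icc]
      exact ⟨⟨by omega, hj.2⟩, smooth_chain_s5 hS i j hi1 hj.1 hj.2 hmem⟩
    have := Finset.card_le_card hsub
    rw [Nat.card_Icc] at this
    omega
  · intro hle
    by_contra hmem
    have hsub : (Finset.Icc 1 n).filter (fun j => v ∈ S j) ⊆ Finset.Icc (i + 1) n := by
      intro j hj
      rw [Finset.mem_filter, Finset.mem_Icc] at hj
      rw [Finset.mem_Icc]
      refine ⟨?_, hj.1.2⟩
      by_contra hji
      exact hmem (smooth_chain_s5 hS j i hj.1.1 (by omega) hi2 hj.2)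
    have := Finset.card_le_card hsub
    rw [Nat.card_Icc] at this
    omega

lemma tmap_PP {S : ℕ → Finset ℕ} (hS : IsSmooth n S) : PP n (tmap n S) := by
  have hmem : ∀ v, 1 ≤ v → v ≤ n + 1 → 1 ≤ tmap n S v ∧ tmap n S v ≤ n + 1 := by
    intro v h1 h2
    have := tmap_card_le (n := n) (S := S) v
    rw [tmap_in h1 h2]
    omega
  apply PP.of_parts hmem
  · -- injectivity
    intro v w hv1 hv2 hw1 hw2 heq
    by_contra hne
    set s := tmap n S v with hs
    have hsb := hmem v hv1 hv2
    rcases (by omega : (2 ≤ s ∧ s ≤ n) ∨ s = 1 ∨ s = n + 1) with hcase | hcase | hcase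
    · -- both in S s, not in S (s-1)
      have hvmem : v ∈ S s := (tmap_mem_iff hS hv1 hv2 (by omega) (by omega)).2 (by omega)
      have hwmem : w ∈ S s := (tmap_mem_iff hS hw1 hw2 (by omega) (by omega)).2 (by omega)
      have hvnot : v ∉ S (s - 1) := by
        rw [tmap_mem_iff hS hv1 hv2 (by omega) (by omega)]
        omega
      have hwnot : w ∉ S (s - 1) := by
        rw [tmap_mem_iff hS hw1 hw2 (by omega) (by omega)]
        omega
      have hsub : insert v (insert w (S (s - 1))) ⊆ S s := by
        intro x hx
        rw [Finset.mem_insert, Finset.mem_insert] at hx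
        rcases hx with rfl | rfl | hx
        · exact hvmem
        · exact hwmem
        · exact smooth_chain_s5 hS (s - 1) s (by omega) (by omega) (by omega) hx
      have hcard : (insert v (insert w (S (s - 1)))).card = s + 1 := by
        rw [Finset.card_insert_of_notMem, Finset.card_insert_of_notMem hwnot,
          (hS.2.1 (s - 1) (by omega) (by omega)).2]
        · omega
        · rw [Finset.mem_insert]
          push_neg
          exact ⟨hne, hvnot⟩
      have := Finset.card_le_card hsub
      rw [hcard, (hS.2.1 s (by omega) (by omega)).2] at this
      omega
    · -- s = 1 : both in S 1 with card 1
      have hvmem : v ∈ S 1 := (tmap_mem_iff hS hv1 hv2 le_rfl ?hn).2 (by omega)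
      case hn =>
        -- need 1 ≤ n : if n = 0 then v, w ∈ [1,1] so v = w
        by_contra hn
        exact hne (by omega)
      have h1n : 1 ≤ n := by
        by_contra hn
        exact hne (by omega)
      have hwmem : w ∈ S 1 := (tmap_mem_iff hS hw1 hw2 le_rfl h1n).2 (by omega)
      obtain ⟨x, hx⟩ := Finset.card_eq_one.1 (hS.2.1 1 le_rfl h1n).2
      rw [hx, Finset.mem_singleton] at hvmem hwmem
      exact hne (hvmem.trans hwmem.symm)
    · -- s = n + 1 : neither in S n
      have h1n : 1 ≤ n := by
        by_contra hn
        exact hne (by omega)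
      have hvnot : v ∉ S n := by
        rw [tmap_mem_iff hS hv1 hv2 h1n le_rfl]
        omega
      have hwnot : w ∉ S n := by
        rw [tmap_mem_iff hS hw1 hw2 h1n le_rfl]
        omega
      have hsub : insert v (insert w (S n)) ⊆ Finset.Icc 1 (n + 1) := by
        intro x hx
        rw [Finset.mem_insert, Finset.mem_insert] at hx
        rcases hx with rfl | rfl | hx
        · rw [Finset.mem_Icc]; omega
        · rw [Finset.mem_Icc]; omega
        · exact (hS.2.1 n h1n le_rfl).1 hx
      have hcard : (insert v (insert w (S n))).card = n + 2 := by
        rw [Finset.card_insert_of_notMem, Finset.card_insert_of_notMem hwnot,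
          (hS.2.1 n h1n le_rfl).2]
        rw [Finset.mem_insert]
        push_neg
        exact ⟨hne, hvnot⟩
      have := Finset.card_le_card hsub
      rw [hcard, Nat.card_Icc] at this
      omega
  · -- id outside
    intro v hv
    rw [tmap, if_neg (by omega)]
  · -- Cond
    intro a b ha hab hb htb
    have hbmem : b ∈ S a := (tmap_mem_iff hS (by omega) (by omega) ha (by omega)).2 htb
    have := hS.2.2.2 a b ha hab hb hbmem
    exact (tmap_mem_iff hS (by omega) (by omega) (by omega) hb).1 this

theorem ncard_smooth (n : ℕ) :
    Set.ncard {S : ℕ → Finset ℕ | IsSmooth n S} = NN n := by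
  classical
  let Φ : {S : ℕ → Finset ℕ // IsSmooth n S} → {f : ℕ → ℕ // PP n f} :=
    fun x => ⟨tmap n x.1, tmap_PP x.2⟩
  have hbij : Function.Bijective Φ := by
    constructor
    · rintro ⟨S, hS⟩ ⟨S', hS'⟩ heq
      simp only [Φ, Subtype.mk.injEq] at heq
      apply Subtype.ext
      simp only []
      funext i
      by_cases hi : 1 ≤ i ∧ i ≤ n
      · apply Finset.ext
        intro v
        constructor
        · intro hv
          have hvb := Finset.mem_Icc.1 ((hS.2.1 i hi.1 hi.2).1 hv)
          rw [tmap_mem_iff hS' hvb.1 hvb.2 hi.1 hi.2, ← heq,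
            ← tmap_mem_iff hS hvb.1 hvb.2 hi.1 hi.2]
          exact hv
        · intro hv
          have hvb := Finset.mem_Icc.1 ((hS'.2.1 i hi.1 hi.2).1 hv)
          rw [tmap_mem_iff hS hvb.1 hvb.2 hi.1 hi.2, heq,
            ← tmap_mem_iff hS' hvb.1 hvb.2 hi.1 hi.2]
          exact hv
      · rw [hS.1 i (by omega), hS'.1 i (by omega)]
    · rintro ⟨f, hf⟩
      set S : ℕ → Finset ℕ := fun i =>
        if 1 ≤ i ∧ i ≤ n then (Finset.Icc 1 (n + 1)).filter (fun v => f v ≤ i) else ∅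
        with hSdef
      have hSin : ∀ i, 1 ≤ i → i ≤ n →
          S i = (Finset.Icc 1 (n + 1)).filter (fun v => f v ≤ i) := by
        intro i h1 h2
        rw [hSdef]
        simp only []
        rw [if_pos ⟨h1, h2⟩]
      have hsmooth : IsSmooth n S := by
        refine ⟨?_, ?_, ?_, ?_⟩
        · intro i hi
          rw [hSdef]
          simp only []
          rw [if_neg (by omega)]
        · intro i h1 h2
          rw [hSin i h1 h2]
          refine ⟨Finset.filter_subset _ _, ?_⟩
          have : ((Finset.Icc 1 (n + 1)).filter (fun v => f v ≤ i)).card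
              = (Finset.Icc 1 i).card := by
            apply Finset.card_bij (fun v _ => f v)
            · intro v hv
              rw [Finset.mem_filter, Finset.mem_Icc] at hv
              rw [Finset.mem_Icc]
              have := hf.mem hv.1.1 hv.1.2
              omega
            · intro v hv w hw hvw
              rw [Finset.mem_filter, Finset.mem_Icc] at hv hw
              exact hf.inj hv.1.1 hv.1.2 hw.1.1 hw.1.2 hvw
            · intro w hw
              rw [Finset.mem_Icc] at hw
              obtain ⟨v, hv1, hv2, hfv⟩ := hf.surj (w := w) (by omega) (by omega)
              refine ⟨v, ?_, hfv⟩
              rw [Finset.mem_filter, Finset.mem_Icc]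
              omega
          rw [this, Nat.card_Icc]
          omega
        · intro i h1 h2
          rw [hSin i h1 (by omega), hSin (i + 1) (by omega) (by omega)]
          intro v hv
          rw [Finset.mem_filter] at hv ⊢
          exact ⟨hv.1, by omega⟩
        · intro a b ha hab hb hmem
          rw [hSin a ha (by omega)] at hmem
          rw [Finset.mem_filter, Finset.mem_Icc] at hmem
          have := hf.2.2 a b ha hab hb hmem.2
          rw [hSin b (by omega) hb, Finset.mem_filter, Finset.mem_Icc]
          exact ⟨by omega, this⟩
      refine ⟨⟨S, hsmooth⟩, ?_⟩
      simp only [Φ, Subtype.mk.injEq]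
      funext v
      by_cases hv : 1 ≤ v ∧ v ≤ n + 1
      · rw [tmap_in hv.1 hv.2]
        have hfb := hf.mem hv.1 hv.2
        have hfilter : (Finset.Icc 1 n).filter (fun i => v ∈ S i) = Finset.Icc (f v) n := by
          apply Finset.ext
          intro i
          rw [Finset.mem_filter, Finset.mem_Icc, Finset.mem_Icc]
          constructor
          · rintro ⟨⟨h1, h2⟩, hmem⟩
            rw [hSin i h1 h2, Finset.mem_filter] at hmem
            exact ⟨hmem.2, h2⟩
          · intro hi
            have h1 : 1 ≤ i := by omega
            have h2 : i ≤ n := hi.2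
            refine ⟨⟨h1, h2⟩, ?_⟩
            rw [hSin i h1 h2, Finset.mem_filter, Finset.mem_Icc]
            exact ⟨⟨hv.1, hv.2⟩, hi.1⟩
        rw [hfilter, Nat.card_Icc]
        omega
      · rw [tmap, if_neg hv, hf.2.1 v (by simp [Set.mem_Icc]; omega)]
  rw [← Nat.card_coe_set_eq]
  exact Nat.card_congr (Equiv.ofBijective Φ hbij)

end smoothEquiv

end SmoothAux

/-- The number of smooth collections of length `n` is the `n`-th large Schröder number;
in particular it is `2, 6, 22, 90` for `n = 1, 2, 3, 4`. -/
theorem stmt_5 (r : ℕ → ℕ) (h0 : r 0 = 1)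
    (hrec : ∀ n, 1 ≤ n → r n = r (n - 1) + ∑ k ∈ Finset.range n, r k * r (n - 1 - k)) :
    (∀ n, Set.ncard {S : ℕ → Finset ℕ | IsSmooth n S} = r n) ∧
    Set.ncard {S : ℕ → Finset ℕ | IsSmooth 1 S} = 2 ∧
    Set.ncard {S : ℕ → Finset ℕ | IsSmooth 2 S} = 6 ∧
    Set.ncard {S : ℕ → Finset ℕ | IsSmooth 3 S} = 22 ∧
    Set.ncard {S : ℕ → Finset ℕ | IsSmooth 4 S} = 90 := by
  have hN : ∀ n, SmoothAux.NN n = r n := by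
    intro n
    induction n using Nat.strong_induction_on with
    | _ n ih =>
      match n with
      | 0 => rw [SmoothAux.NN_zero, h0]
      | (m + 1) =>
        rw [SmoothAux.NN_rec m, hrec (m + 1) (Nat.le_add_left 1 m)]
        simp only [Nat.add_sub_cancel]
        congr 1
        · exact ih m (Nat.lt_succ_self m)
        · apply Finset.sum_congr rfl
          intro k hk
          rw [Finset.mem_range] at hk
          rw [ih k hk, ih (m - k) (Nat.lt_succ_of_le (Nat.sub_le m k))]
  have key : ∀ n, Set.ncard {S : ℕ → Finset ℕ | IsSmooth n S} = r n := by
    intro n; rw [SmoothAux.ncard_smooth n, hN n]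
  have r1 : r 1 = 2 := by rw [hrec 1 le_rfl]; simp [h0]
  have r2 : r 2 = 6 := by
    rw [hrec 2 (by norm_num)]; simp [Finset.sum_range_succ, h0, r1]
  have r3 : r 3 = 22 := by
    rw [hrec 3 (by norm_num)]; simp [Finset.sum_range_succ, h0, r1, r2]
  have r4 : r 4 = 90 := by
    rw [hrec 4 (by norm_num)]; simp [Finset.sum_range_succ, h0, r1, r2, r3]
  exact ⟨key, by rw [key 1, r1], by rw [key 2, r2], by rw [key 3, r3], by rw [key 4, r4]⟩
end

section
/- Let the map σ send a collection S = (S_1,...,S_n) of subsets of {1,...,n+1} to (wS_1,...,wS_n), where w is the transposition of {1,...,n+1} exchanging 1 and n+1 and fixing all other elements. Then σ maps smooth collections to smooth collections, σ² is the identity, and σ has no fixed points on the set of smooth collections. -/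
/-- The transposition of `{1, ..., n+1}` exchanging `1` and `n+1`. -/
def wTrans (n : ℕ) (x : ℕ) : ℕ :=
  if x = 1 then n + 1 else if x = n + 1 then 1 else x

/-- The involution `σ` on collections, applying `wTrans n` to every subset. -/
def sigmaColl (n : ℕ) (S : ℕ → Finset ℕ) : ℕ → Finset ℕ :=
  fun i => (S i).image (wTrans n)

lemma wTrans_invol (n : ℕ) (x : ℕ) : wTrans n (wTrans n x) = x := by
  unfold wTrans
  split_ifs <;> omega

lemma wTrans_inj (n : ℕ) : Function.Injective (wTrans n) := by
  intro a b h
  rw [← wTrans_invol n a, h, wTrans_invol]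

lemma mem_image_w {n : ℕ} {s : Finset ℕ} {x : ℕ} :
    x ∈ s.image (wTrans n) ↔ wTrans n x ∈ s := by
  simp only [Finset.mem_image]
  constructor
  · rintro ⟨y, hy, rfl⟩; rwa [wTrans_invol]
  · intro h; exact ⟨_, h, wTrans_invol n x⟩

lemma wTrans_eq_self {n x : ℕ} (h1 : x ≠ 1) (h2 : x ≠ n + 1) : wTrans n x = x := by
  simp [wTrans, h1, h2]

/-- `σ` maps smooth collections to smooth collections, is an involution, and has no
fixed points among smooth collections. -/
theorem stmt_6 (n : ℕ) (hn : 1 ≤ n) (S : ℕ → Finset ℕ) (hS : IsSmooth n S) :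
    IsSmooth n (sigmaColl n S) ∧ sigmaColl n (sigmaColl n S) = S ∧ sigmaColl n S ≠ S := by
  obtain ⟨h0, h1, h2, h3⟩ := hS
  refine ⟨⟨?_, ?_, ?_, ?_⟩, ?_, ?_⟩
  · intro i hi
    simp [sigmaColl, h0 i hi]
  · intro i hi1 hi2
    constructor
    · intro x hx
      rw [sigmaColl] at hx
      obtain ⟨y, hy, rfl⟩ := Finset.mem_image.mp hx
      have := Finset.mem_Icc.mp ((h1 i hi1 hi2).1 hy)
      unfold wTrans
      split_ifs <;> simp [Finset.mem_Icc] <;> omega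
    · rw [sigmaColl, Finset.card_image_of_injective _ (wTrans_inj n)]
      exact (h1 i hi1 hi2).2
  · intro i hi1 hi2
    exact Finset.image_subset_image (h2 i hi1 hi2)
  · intro a b ha hab hb hmem
    rw [sigmaColl, mem_image_w, wTrans_eq_self (by omega) (by omega)] at hmem
    rw [sigmaColl, mem_image_w, wTrans_eq_self (by omega) (by omega)]
    exact h3 a b ha hab hb hmem
  · funext i
    ext x
    simp only [sigmaColl, mem_image_w, wTrans_invol]
  · intro heq
    have hinv : ∀ i x, x ∈ S i → wTrans n x ∈ S i := by
      intro i x hx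
      have := congrFun heq i
      rw [sigmaColl] at this
      exact mem_image_w.mp (by rw [this]; exact hx)
    -- 1 ∈ S n
    have h1n : 1 ∈ S n := by
      by_contra h
      have hn1 : n + 1 ∉ S n := by
        intro hc
        have := hinv n (n + 1) hc
        rw [show wTrans n (n + 1) = 1 from by unfold wTrans; split_ifs <;> omega] at this
        exact h this
      have hsub : S n ⊆ Finset.Icc 2 n := by
        intro x hx
        have := Finset.mem_Icc.mp ((h1 n hn le_rfl).1 hx)
        have hx1 : x ≠ 1 := fun e => h (e ▸ hx)
        have hx2 : x ≠ n + 1 := fun e => hn1 (e ▸ hx)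
        rw [Finset.mem_Icc]; omega
      have := Finset.card_le_card hsub
      rw [(h1 n hn le_rfl).2, Nat.card_Icc] at this
      omega
    have hex : ∃ k, 1 ∈ S k := ⟨n, h1n⟩
    set k := Nat.find hex with hk
    have hk1 : 1 ∈ S k := Nat.find_spec hex
    have hkn : k ≤ n := by
      by_contra h
      have := h0 k (Or.inr (by omega))
      rw [this] at hk1; simp at hk1
    have hk0 : k ≠ 0 := by
      intro h
      rw [h, h0 0 (Or.inl rfl)] at hk1; simp at hk1
    have hnk : n + 1 ∈ S k := by
      have := hinv k 1 hk1
      rwa [show wTrans n 1 = n + 1 from by unfold wTrans; split_ifs <;> omega] at this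
    rcases eq_or_lt_of_le (show 1 ≤ k by omega) with h | h
    · -- k = 1 : S 1 has card 1 but contains 1 and n+1
      have hcard : (S k).card = k := (h1 k (by omega) hkn).2
      have : ({1, n + 1} : Finset ℕ) ⊆ S k := by
        intro x hx
        simp only [Finset.mem_insert, Finset.mem_singleton] at hx
        rcases hx with rfl | rfl
        · exact hk1
        · exact hnk
      have hle := Finset.card_le_card this
      rw [hcard, Finset.card_insert_of_notMem (by simp; omega), Finset.card_singleton] at hle
      omega
    · -- k ≥ 2
      have hk1' : 1 ∉ S (k - 1) := Nat.find_min hex (by omega)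
      have hnk' : n + 1 ∉ S (k - 1) := by
        intro hc
        have := hinv (k - 1) (n + 1) hc
        rw [show wTrans n (n + 1) = 1 from by unfold wTrans; split_ifs <;> omega] at this
        exact hk1' this
      have hsub : S (k - 1) ⊆ S k := by
        have := h2 (k - 1) (by omega) (by omega)
        rwa [show k - 1 + 1 = k by omega] at this
      have hbig : insert 1 (insert (n + 1) (S (k - 1))) ⊆ S k := by
        intro x hx
        simp only [Finset.mem_insert] at hx
        rcases hx with rfl | rfl | hx
        · exact hk1
        · exact hnk
        · exact hsub hx
      have hle := Finset.card_le_card hbig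
      rw [Finset.card_insert_of_notMem (by simp; constructor <;> first | omega | exact hk1'),
        Finset.card_insert_of_notMem hnk', (h1 (k - 1) (by omega) (by omega)).2,
        (h1 k (by omega) hkn).2] at hle
      omega
end

section
/- The number of smooth collections of length n is even for every n ≥ 1, and equals twice the number of smooth collections (S_1,...,S_n) satisfying: for all m = 1,...,n, if 1 ∈ S_m then n+1 ∈ S_m. -/
private def tauC (n : ℕ) (S : ℕ → Finset ℕ) : ℕ → Finset ℕ :=
  fun i => (S i).map (Equiv.swap 1 (n+1)).toEmbedding

private lemma mem_tauC (n : ℕ) (S : ℕ → Finset ℕ) (i a : ℕ) :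
    a ∈ tauC n S i ↔ Equiv.swap 1 (n+1) a ∈ S i := by
  simp [tauC, Finset.mem_map_equiv]

private lemma tauC_tauC (n : ℕ) (S : ℕ → Finset ℕ) : tauC n (tauC n S) = S := by
  funext i
  ext a
  rw [mem_tauC, mem_tauC, Equiv.swap_apply_self]

private lemma tauC_inj (n : ℕ) : Function.Injective (tauC n) := by
  intro S T h
  have := congrArg (tauC n) h
  rwa [tauC_tauC, tauC_tauC] at this

private lemma swap_mem_Icc (n a : ℕ) (hn : 1 ≤ n) (ha : a ∈ Finset.Icc 1 (n+1)) :
    Equiv.swap 1 (n+1) a ∈ Finset.Icc 1 (n+1) := by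
  rcases eq_or_ne a 1 with rfl | h1
  · rw [Equiv.swap_apply_left]; simp
  rcases eq_or_ne a (n+1) with rfl | h2
  · rw [Equiv.swap_apply_right]; simp [hn]
  · rwa [Equiv.swap_apply_of_ne_of_ne h1 h2]

private lemma tauC_smooth (n : ℕ) (hn : 1 ≤ n) (S : ℕ → Finset ℕ) (hS : IsSmooth n S) :
    IsSmooth n (tauC n S) := by
  obtain ⟨h0, h1, h2, h3⟩ := hS
  refine ⟨fun i hi => by simp [tauC, h0 i hi], fun i hi1 hi2 => ⟨?_, ?_⟩,
    fun i hi1 hi2 => ?_, fun a b ha hab hb hmem => ?_⟩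
  · intro a ha
    rw [mem_tauC] at ha
    have := (h1 i hi1 hi2).1 ha
    have := swap_mem_Icc n _ hn this
    rwa [Equiv.swap_apply_self] at this
  · rw [tauC, Finset.card_map]; exact (h1 i hi1 hi2).2
  · intro a ha
    rw [mem_tauC] at ha ⊢
    exact h2 i hi1 hi2 ha
  · rw [mem_tauC] at hmem ⊢
    have hb1 : b ≠ 1 := by omega
    have hb2 : b ≠ n + 1 := by omega
    rw [Equiv.swap_apply_of_ne_of_ne hb1 hb2] at hmem
    have ha1 : a + 1 ≠ 1 := by omega
    have ha2 : a + 1 ≠ n + 1 := by omega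
    rw [Equiv.swap_apply_of_ne_of_ne ha1 ha2]
    exact h3 a b ha hab hb hmem

private lemma smooth_mono (n : ℕ) (S : ℕ → Finset ℕ) (hS : IsSmooth n S) :
    ∀ i j, 1 ≤ i → i ≤ j → j ≤ n → S i ⊆ S j := by
  intro i j hi hij hj
  induction j with
  | zero => omega
  | succ k ih =>
    rcases Nat.lt_or_ge i (k+1) with h | h
    · have : S k ⊆ S (k+1) := hS.2.2.1 k (by omega) (by omega)
      exact (ih (by omega) (by omega)).trans this
    · have : i = k + 1 := by omega
      rw [this]

private lemma not_balanced (n : ℕ) (hn : 1 ≤ n) (S : ℕ → Finset ℕ) (hS : IsSmooth n S)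
    (h : ∀ m, 1 ≤ m → m ≤ n → (1 ∈ S m ↔ n + 1 ∈ S m)) : False := by
  obtain ⟨h0, h1, h2, h3⟩ := hS
  have hSn : 1 ∈ S n := by
    by_contra h1n
    have h2n : n + 1 ∉ S n := fun hc => h1n ((h n hn le_rfl).mpr hc)
    have hsub : S n ⊆ Finset.Icc 2 n := by
      intro a ha
      have := (h1 n hn le_rfl).1 ha
      simp only [Finset.mem_Icc] at this ⊢
      constructor
      · rcases Nat.lt_or_ge a 2 with h' | h'
        · interval_cases a
          · omega
          · exact absurd ha h1n
        · exact h'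
      · rcases Nat.lt_or_ge a (n+1) with h' | h'
        · omega
        · exfalso; have : a = n + 1 := by omega
          exact h2n (this ▸ ha)
    have hcard := Finset.card_le_card hsub
    rw [(h1 n hn le_rfl).2, Nat.card_Icc] at hcard
    omega
  have hex : ∃ m, 1 ∈ S m := ⟨n, hSn⟩
  set m := Nat.find hex with hm
  have hPm : 1 ∈ S m := Nat.find_spec hex
  have hm1 : 1 ≤ m := by
    rcases Nat.eq_zero_or_pos m with h' | h'
    · exfalso; rw [h', h0 0 (Or.inl rfl)] at hPm; simp at hPm
    · exact h'
  have hmn : m ≤ n := Nat.find_le hSn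
  have hQm : n + 1 ∈ S m := (h m hm1 hmn).mp hPm
  rcases Nat.eq_or_lt_of_le hm1 with h' | h'
  · -- m = 1
    have hsub : ({1, n+1} : Finset ℕ) ⊆ S m := by
      intro a ha; simp at ha; rcases ha with rfl | rfl <;> assumption
    have hcard := Finset.card_le_card hsub
    rw [(h1 m hm1 hmn).2] at hcard
    rw [Finset.card_insert_of_notMem (by simp; omega), Finset.card_singleton] at hcard
    omega
  · -- m ≥ 2
    obtain ⟨k, hk⟩ : ∃ k, m = k + 1 := ⟨m - 1, by omega⟩
    rw [hk] at hPm hQm hmn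
    have hk1 : 1 ≤ k := by omega
    have hnot1 : 1 ∉ S k := Nat.find_min hex (by omega)
    have hnot2 : n + 1 ∉ S k := fun hc => hnot1 ((h k hk1 (by omega)).mpr hc)
    have hsub : insert 1 (insert (n+1) (S k)) ⊆ S (k+1) := by
      intro a ha
      simp only [Finset.mem_insert] at ha
      rcases ha with rfl | rfl | ha
      · exact hPm
      · exact hQm
      · exact h2 k hk1 (by omega) ha
    have hcard := Finset.card_le_card hsub
    rw [Finset.card_insert_of_notMem (by simp; exact ⟨by omega, hnot1⟩),
        Finset.card_insert_of_notMem hnot2, (h1 k hk1 (by omega)).2,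
        (h1 (k+1) (by omega) hmn).2] at hcard
    omega

private def Good (n : ℕ) (S : ℕ → Finset ℕ) : Prop :=
  ∀ m, 1 ≤ m → m ≤ n → 1 ∈ S m → n + 1 ∈ S m

private lemma good_tauC_iff (n : ℕ) (S : ℕ → Finset ℕ) :
    Good n (tauC n S) ↔ ∀ m, 1 ≤ m → m ≤ n → n + 1 ∈ S m → 1 ∈ S m := by
  unfold Good
  constructor <;> intro H m hm1 hm2 hmem
  · have := H m hm1 hm2 (by rw [mem_tauC, Equiv.swap_apply_left]; exact hmem)
    rwa [mem_tauC, Equiv.swap_apply_right] at this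
  · rw [mem_tauC, Equiv.swap_apply_left] at hmem
    rw [mem_tauC, Equiv.swap_apply_right]
    exact H m hm1 hm2 hmem

private lemma good_or (n : ℕ) (hn : 1 ≤ n) (S : ℕ → Finset ℕ) (hS : IsSmooth n S) :
    Good n S ∨ Good n (tauC n S) := by
  by_contra hc
  push_neg at hc
  obtain ⟨hng, hng'⟩ := hc
  rw [good_tauC_iff] at hng'
  unfold Good at hng
  push_neg at hng hng'
  obtain ⟨m, hm1, hm2, hmem, hnmem⟩ := hng
  obtain ⟨m', hm1', hm2', hmem', hnmem'⟩ := hng'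
  rcases le_or_gt m m' with h' | h'
  · exact hnmem' (smooth_mono n S hS m m' hm1 h' hm2' hmem)
  · exact hnmem (smooth_mono n S hS m' m hm1' (by omega) hm2 hmem')

private lemma not_good_both (n : ℕ) (hn : 1 ≤ n) (S : ℕ → Finset ℕ) (hS : IsSmooth n S)
    (hg : Good n S) (hg' : Good n (tauC n S)) : False := by
  rw [good_tauC_iff] at hg'
  exact not_balanced n hn S hS (fun m hm1 hm2 => ⟨hg m hm1 hm2, hg' m hm1 hm2⟩)

private lemma smooth_finite (n : ℕ) : {S : ℕ → Finset ℕ | IsSmooth n S}.Finite := by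
  have : Finite {S : ℕ → Finset ℕ // IsSmooth n S} := by
    let F : {S : ℕ → Finset ℕ // IsSmooth n S} →
        (↥(Finset.Icc 1 n) → ↥((Finset.Icc 1 (n+1)).powerset)) :=
      fun S i => ⟨S.1 i.1, by
        rw [Finset.mem_powerset]
        have hi := Finset.mem_Icc.mp i.2
        exact (S.2.2.1 i.1 hi.1 hi.2).1⟩
    have hF : Function.Injective F := by
      intro S T h
      ext i a
      rcases Nat.lt_or_ge i 1 with hi | hi
      · have : i = 0 := by omega
        rw [this, S.2.1 0 (Or.inl rfl), T.2.1 0 (Or.inl rfl)]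
      rcases le_or_gt i n with hi2 | hi2
      · have := congrFun h ⟨i, Finset.mem_Icc.mpr ⟨hi, hi2⟩⟩
        have := congrArg Subtype.val this
        simp only [F] at this
        rw [this]
      · rw [S.2.1 i (Or.inr hi2), T.2.1 i (Or.inr hi2)]
    exact Finite.of_injective F hF
  exact Set.finite_coe_iff.mp this

/-- The number of smooth collections of length `n ≥ 1` is even, and equals twice the number
of smooth collections such that `1 ∈ S m` implies `n+1 ∈ S m` for all `m`. -/
theorem stmt_7 (n : ℕ) (hn : 1 ≤ n) :
    Even (Set.ncard {S : ℕ → Finset ℕ | IsSmooth n S}) ∧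
    Set.ncard {S : ℕ → Finset ℕ | IsSmooth n S} =
      2 * Set.ncard {S : ℕ → Finset ℕ | IsSmooth n S ∧
        ∀ m, 1 ≤ m → m ≤ n → 1 ∈ S m → n + 1 ∈ S m} := by
  set A := {S : ℕ → Finset ℕ | IsSmooth n S} with hA
  set B := {S : ℕ → Finset ℕ | IsSmooth n S ∧
      ∀ m, 1 ≤ m → m ≤ n → 1 ∈ S m → n + 1 ∈ S m} with hB
  have hBA : B ⊆ A := fun S hS => hS.1
  have hAfin : A.Finite := smooth_finite n
  have hBfin : B.Finite := hAfin.subset hBA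
  have himfin : (tauC n '' B).Finite := hBfin.image _
  have hsplit : A = B ∪ (tauC n '' B) := by
    apply Set.Subset.antisymm
    · intro S hS
      rcases good_or n hn S hS with hg | hg
      · exact Or.inl ⟨hS, hg⟩
      · right
        exact ⟨tauC n S, ⟨tauC_smooth n hn S hS, hg⟩, tauC_tauC n S⟩
    · intro S hS
      rcases hS with hS | ⟨T, hT, rfl⟩
      · exact hS.1
      · exact tauC_smooth n hn T hT.1
  have hdisj : Disjoint B (tauC n '' B) := by
    rw [Set.disjoint_left]
    rintro S ⟨hS, hgS⟩ ⟨T, ⟨hT, hgT⟩, rfl⟩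
    exact not_good_both n hn T hT hgT hgS
  have him : (tauC n '' B).ncard = B.ncard :=
    Set.ncard_image_of_injective B (tauC_inj n)
  have key : A.ncard = 2 * B.ncard := by
    rw [hsplit, Set.ncard_union_eq hdisj hBfin himfin, him]
    ring
  exact ⟨key ▸ ⟨B.ncard, by ring⟩, key⟩
end

section
/- For a smooth collection S of length n, define π ∈ Sym({1,...,n+1}) by letting π(m) be the unique element of S_m \ S_{m-1} (with S_0 = ∅ and S_{n+1} = {1,...,n+1}). This map is a bijection from smooth collections of length n onto the set of permutations π of {1,...,n+1} satisfying: for all 1 ≤ a < b ≤ n, if π⁻¹(b) ≤ a then π⁻¹(a+1) ≤ b. -/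
/-- The extended chain: `E S 0 = ∅`, `E S m = S m` for `1 ≤ m ≤ n`, and
`E S m = {1, ..., n+1}` for `m > n`. -/
def extColl (n : ℕ) (S : ℕ → Finset ℕ) (m : ℕ) : Finset ℕ :=
  if m = 0 then ∅ else if m ≤ n then S m else Finset.Icc 1 (n + 1)

/-- The permutation attached to a smooth collection: `π(m)` is the unique element of
`S m \ S (m-1)` (realized as the sum over the singleton difference), and `0` outside
`{1, ..., n+1}`. -/
def piOf (n : ℕ) (S : ℕ → Finset ℕ) (m : ℕ) : ℕ :=
  if 1 ≤ m ∧ m ≤ n + 1 then ∑ x ∈ extColl n S m \ extColl n S (m - 1), x else 0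

/-- Permutations `π` of `{1, ..., n+1}` (extended by `0` elsewhere) such that for all
`1 ≤ a < b ≤ n`, `π⁻¹(b) ≤ a` implies `π⁻¹(a+1) ≤ b`. -/
def GoodPerm (n : ℕ) (p : ℕ → ℕ) : Prop :=
  Set.BijOn p (Set.Icc 1 (n + 1)) (Set.Icc 1 (n + 1)) ∧
  (∀ m, m ∉ Set.Icc 1 (n + 1) → p m = 0) ∧
  (∀ a b, 1 ≤ a → a < b → b ≤ n →
    (∃ x, 1 ≤ x ∧ x ≤ a ∧ p x = b) → (∃ y, 1 ≤ y ∧ y ≤ b ∧ p y = a + 1))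

lemma ext_card (n : ℕ) (S : ℕ → Finset ℕ) (h : IsSmooth n S) :
    ∀ m, m ≤ n + 1 → (extColl n S m).card = m := by
  intro m hm
  unfold extColl
  rcases Nat.eq_zero_or_pos m with h0 | h1
  · simp [h0]
  · rcases le_or_gt m n with h2 | h2
    · simp [Nat.pos_iff_ne_zero.mp h1, h2, (h.2.1 m h1 h2).2]
    · have : m = n + 1 := le_antisymm hm h2
      simp [this, Nat.not_succ_le_self]

lemma ext_subset_Icc (n : ℕ) (S : ℕ → Finset ℕ) (h : IsSmooth n S) :
    ∀ m, extColl n S m ⊆ Finset.Icc 1 (n + 1) := by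
  intro m
  unfold extColl
  rcases Nat.eq_zero_or_pos m with h0 | h1
  · simp [h0]
  · rcases le_or_gt m n with h2 | h2
    · simpa [Nat.pos_iff_ne_zero.mp h1, h2] using (h.2.1 m h1 h2).1
    · simp [Nat.pos_iff_ne_zero.mp h1, not_le.mpr h2]

lemma ext_mono (n : ℕ) (S : ℕ → Finset ℕ) (h : IsSmooth n S) :
    ∀ m, extColl n S m ⊆ extColl n S (m + 1) := by
  intro m
  rcases Nat.eq_zero_or_pos m with h0 | h1
  · simp [h0, extColl]
  · rcases le_or_gt (m + 1) n with h2 | h2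
    · have h3 : m ≤ n := le_trans (Nat.le_succ m) h2
      simpa [extColl, Nat.pos_iff_ne_zero.mp h1, h2, h3, Nat.succ_ne_zero]
        using h.2.2.1 m h1 (lt_of_lt_of_le (Nat.lt_succ_self m) h2)
    · have : extColl n S (m + 1) = Finset.Icc 1 (n + 1) := by
        simp [extColl, Nat.succ_ne_zero, not_le.mpr h2]
      rw [this]
      exact ext_subset_Icc n S h m

lemma ext_diff (n : ℕ) (S : ℕ → Finset ℕ) (h : IsSmooth n S) (m : ℕ)
    (h1 : 1 ≤ m) (h2 : m ≤ n + 1) :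
    extColl n S m \ extColl n S (m - 1) = {piOf n S m} := by
  have hsub : extColl n S (m - 1) ⊆ extColl n S m := by
    have := ext_mono n S h (m - 1)
    rwa [Nat.sub_add_cancel h1] at this
  have hcard : (extColl n S m \ extColl n S (m - 1)).card = 1 := by
    rw [Finset.card_sdiff_of_subset hsub, ext_card n S h m h2,
      ext_card n S h (m - 1) (le_trans (Nat.sub_le m 1) h2)]
    omega
  obtain ⟨x, hx⟩ := Finset.card_eq_one.mp hcard
  rw [hx]
  congr 1
  simp [piOf, h1, h2, hx]

lemma ext_eq_image (n : ℕ) (S : ℕ → Finset ℕ) (h : IsSmooth n S) :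
    ∀ m, m ≤ n + 1 → extColl n S m = Finset.image (piOf n S) (Finset.Icc 1 m) := by
  intro m
  induction m with
  | zero => simp [extColl]
  | succ m ih =>
    intro hm
    have ih' := ih (le_trans (Nat.le_succ m) hm)
    have hdiff := ext_diff n S h (m + 1) (Nat.succ_le_succ (Nat.zero_le m)) hm
    simp only [Nat.add_sub_cancel] at hdiff
    have hsub := ext_mono n S h m
    have : extColl n S (m + 1) = extColl n S m ∪ (extColl n S (m + 1) \ extColl n S m) :=
      (Finset.union_sdiff_of_subset hsub).symm
    rw [this, hdiff, ih']
    have : Finset.Icc 1 (m + 1) = insert (m + 1) (Finset.Icc 1 m) := by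
      ext x; simp only [Finset.mem_Icc, Finset.mem_insert]; omega
    rw [this, Finset.image_insert]
    ext x; simp [or_comm]

lemma piOf_good (n : ℕ) (S : ℕ → Finset ℕ) (h : IsSmooth n S) : GoodPerm n (piOf n S) := by
  have himg : Finset.image (piOf n S) (Finset.Icc 1 (n + 1)) = Finset.Icc 1 (n + 1) := by
    rw [← ext_eq_image n S h (n + 1) le_rfl]
    simp [extColl, Nat.not_succ_le_self]
  have hinj : Set.InjOn (piOf n S) (Finset.Icc 1 (n + 1) : Finset ℕ) := by
    rw [← Finset.card_image_iff]
    rw [himg]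
  have hicc : ((Finset.Icc 1 (n + 1) : Finset ℕ) : Set ℕ) = Set.Icc 1 (n + 1) := by
    simp
  refine ⟨⟨?_, ?_, ?_⟩, ?_, ?_⟩
  · intro x hx
    rw [← hicc] at hx ⊢
    rw [← himg]
    exact_mod_cast Finset.mem_image_of_mem _ (by exact_mod_cast hx)
  · rw [← hicc]; exact hinj
  · intro y hy
    rw [← hicc] at hy
    have : y ∈ Finset.image (piOf n S) (Finset.Icc 1 (n + 1)) := by
      rw [himg]; exact_mod_cast hy
    obtain ⟨x, hx, hxy⟩ := Finset.mem_image.mp this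
    exact ⟨x, by simpa using hx, hxy⟩
  · intro m hm
    simp only [Set.mem_Icc, not_and, not_le] at hm
    simp only [piOf]
    rw [if_neg]
    omega
  · intro a b ha hab hbn ⟨x, hx1, hxa, hxb⟩
    have hbS : b ∈ S a := by
      have : b ∈ Finset.image (piOf n S) (Finset.Icc 1 a) := by
        exact Finset.mem_image.mpr ⟨x, Finset.mem_Icc.mpr ⟨hx1, hxa⟩, hxb⟩
      rw [← ext_eq_image n S h a (by omega)] at this
      rw [extColl, if_neg (by omega), if_pos (by omega)] at this; exact this
    have := h.2.2.2 a b ha hab hbn hbS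
    have : a + 1 ∈ extColl n S b := by
      rw [extColl, if_neg (by omega), if_pos hbn]; exact this
    rw [ext_eq_image n S h b (by omega)] at this
    obtain ⟨y, hy, hya⟩ := Finset.mem_image.mp this
    rw [Finset.mem_Icc] at hy
    exact ⟨y, hy.1, hy.2, hya⟩

lemma good_image_inj (n : ℕ) (p : ℕ → ℕ) (hp : GoodPerm n p) (m : ℕ) (hm : m ≤ n + 1) :
    (Finset.image p (Finset.Icc 1 m)).card = m := by
  rw [Finset.card_image_of_injOn, Nat.card_Icc]
  · omega
  · intro x hx y hy hxy
    simp only [Finset.coe_Icc, Set.mem_Icc] at hx hy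
    exact hp.1.2.1 (Set.mem_Icc.mpr ⟨hx.1, by omega⟩) (Set.mem_Icc.mpr ⟨hy.1, by omega⟩) hxy

lemma good_image_sub (n : ℕ) (p : ℕ → ℕ) (hp : GoodPerm n p) (m : ℕ) (hm : m ≤ n + 1) :
    Finset.image p (Finset.Icc 1 m) ⊆ Finset.Icc 1 (n + 1) := by
  intro x hx
  obtain ⟨i, hi, rfl⟩ := Finset.mem_image.mp hx
  rw [Finset.mem_Icc] at hi
  have := hp.1.1 (Set.mem_Icc.mpr ⟨hi.1, by omega⟩)
  rw [Set.mem_Icc] at this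
  exact Finset.mem_Icc.mpr this

lemma good_smooth (n : ℕ) (p : ℕ → ℕ) (hp : GoodPerm n p) :
    IsSmooth n (fun m => if 1 ≤ m ∧ m ≤ n then Finset.image p (Finset.Icc 1 m) else ∅) := by
  refine ⟨?_, ?_, ?_, ?_⟩
  · intro i hi
    simp only [if_neg (by omega : ¬(1 ≤ i ∧ i ≤ n))]
  · intro i h1 h2
    simp only [if_pos (show 1 ≤ i ∧ i ≤ n from ⟨h1, h2⟩)]
    exact ⟨good_image_sub n p hp i (by omega), good_image_inj n p hp i (by omega)⟩
  · intro i h1 h2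
    simp only [if_pos (⟨h1, le_of_lt h2⟩ : 1 ≤ i ∧ i ≤ n), if_pos (⟨by omega, h2⟩ : 1 ≤ i + 1 ∧ i + 1 ≤ n)]
    exact Finset.image_subset_image (Finset.Icc_subset_Icc le_rfl (Nat.le_succ i))
  · intro a b ha hab hbn hb
    simp only [if_pos (⟨ha, by omega⟩ : 1 ≤ a ∧ a ≤ n)] at hb
    simp only [if_pos (⟨by omega, hbn⟩ : 1 ≤ b ∧ b ≤ n)]
    obtain ⟨x, hx, hxb⟩ := Finset.mem_image.mp hb
    rw [Finset.mem_Icc] at hx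
    obtain ⟨y, hy1, hy2, hya⟩ := hp.2.2 a b ha hab hbn ⟨x, hx.1, hx.2, hxb⟩
    exact Finset.mem_image.mpr ⟨y, Finset.mem_Icc.mpr ⟨hy1, hy2⟩, hya⟩

lemma good_ext (n : ℕ) (p : ℕ → ℕ) (hp : GoodPerm n p) (m : ℕ) (hm : m ≤ n + 1) :
    extColl n (fun m => if 1 ≤ m ∧ m ≤ n then Finset.image p (Finset.Icc 1 m) else ∅) m
      = Finset.image p (Finset.Icc 1 m) := by
  rcases Nat.eq_zero_or_pos m with h0 | h1
  · simp [h0, extColl]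
  · rcases le_or_gt m n with h2 | h2
    · simp [extColl, Nat.pos_iff_ne_zero.mp h1, h2]
    · have hmeq : m = n + 1 := by omega
      rw [extColl, if_neg (by omega), if_neg (by omega)]
      refine (Finset.eq_of_subset_of_card_le (good_image_sub n p hp m hm) ?_).symm
      rw [good_image_inj n p hp m hm, Nat.card_Icc, hmeq]
      omega

lemma good_piOf (n : ℕ) (p : ℕ → ℕ) (hp : GoodPerm n p) :
    piOf n (fun m => if 1 ≤ m ∧ m ≤ n then Finset.image p (Finset.Icc 1 m) else ∅) = p := by
  funext m
  by_cases hm : 1 ≤ m ∧ m ≤ n + 1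
  · rw [piOf, if_pos hm, good_ext n p hp m hm.2,
      good_ext n p hp (m - 1) (by omega)]
    have hdiff : Finset.image p (Finset.Icc 1 m) \ Finset.image p (Finset.Icc 1 (m - 1)) = {p m} := by
      ext x
      simp only [Finset.mem_sdiff, Finset.mem_image, Finset.mem_Icc, Finset.mem_singleton]
      constructor
      · rintro ⟨⟨i, hi, rfl⟩, hnot⟩
        have : i = m := by
          by_contra hne
          exact hnot ⟨i, ⟨hi.1, by omega⟩, rfl⟩
        rw [this]
      · rintro rfl
        refine ⟨⟨m, ⟨hm.1, le_rfl⟩, rfl⟩, ?_⟩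
        rintro ⟨i, hi, hip⟩
        have : i = m := hp.1.2.1 (Set.mem_Icc.mpr ⟨hi.1, by omega⟩)
          (Set.mem_Icc.mpr ⟨hm.1, hm.2⟩) hip
        omega
    rw [hdiff, Finset.sum_singleton]
  · rw [piOf, if_neg hm, (hp.2.1 m (by simp only [Set.mem_Icc]; omega)).symm]

/-- For a smooth collection `S`, each difference `S m \ S (m-1)` is the singleton
`{π(m)}`, and `S ↦ π` is a bijection from smooth collections of length `n` onto the
set of permutations `π` of `{1, ..., n+1}` such that for all `1 ≤ a < b ≤ n`,
`π⁻¹(b) ≤ a` implies `π⁻¹(a+1) ≤ b`. -/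
theorem stmt_8 (n : ℕ) :
    (∀ S : ℕ → Finset ℕ, IsSmooth n S → ∀ m, 1 ≤ m → m ≤ n + 1 →
      extColl n S m \ extColl n S (m - 1) = {piOf n S m}) ∧
    Set.BijOn (piOf n) {S : ℕ → Finset ℕ | IsSmooth n S} {p : ℕ → ℕ | GoodPerm n p} := by
  refine ⟨fun S hS m h1 h2 => ext_diff n S hS m h1 h2, ?_, ?_, ?_⟩
  · intro S hS
    exact piOf_good n S hS
  · intro S hS T hT heq
    funext m
    by_cases hm : 1 ≤ m ∧ m ≤ n
    · have h1 : S m = extColl n S m := by rw [extColl, if_neg (by omega), if_pos hm.2]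
      have h2 : T m = extColl n T m := by rw [extColl, if_neg (by omega), if_pos hm.2]
      rw [h1, h2, ext_eq_image n S hS m (by omega), ext_eq_image n T hT m (by omega), heq]
    · rw [hS.1 m (by omega), hT.1 m (by omega)]
  · intro p hp
    exact ⟨_, good_smooth n p hp, good_piOf n p hp⟩
end
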